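/- arXiv:1410.7470 — 9 statements merged into one kernel-verified Lean document; each statement's English description precedes it below -/
import Mathlib

section
/- Let C and C' be families of n-cubes containing all the maximal subcubes of their unions γ(C) and γ(C') respectively. Then the family {c ∩ c' : c ∈ C, c' ∈ C'} contains all the maximal subcubes of γ(C) ∩ γ(C'). -/
open Set

/-- An `n`-cube: a product of `n` intervals (order-convex subsets) of `ℝ`. -/
def IsCube {n : ℕ} (C : Set (Fin n → ℝ)) : Prop :=
  ∃ I : Fin n → Set ℝ, (∀ i, (I i).OrdConnected) ∧ C = Set.pi Set.univ I

/-- A maximal subcube of `X`: a cube contained in `X`, maximal for inclusion. -/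
def IsMaxSubcube {n : ℕ} (C X : Set (Fin n → ℝ)) : Prop :=
  IsCube C ∧ C ⊆ X ∧ ∀ C', IsCube C' → C' ⊆ X → C ⊆ C' → C = C'

/-- A cubical area: a subset admitting a finite cover by cubes. -/
lemma isCube_inter {n : ℕ} {C C' : Set (Fin n → ℝ)} (h : IsCube C) (h' : IsCube C') :
    IsCube (C ∩ C') := by
  obtain ⟨I, hI, rfl⟩ := h
  obtain ⟨I', hI', rfl⟩ := h'
  exact ⟨fun i => I i ∩ I' i, fun i => (hI i).inter (hI' i), (pi_inter_distrib).symm⟩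

/-- A nonempty cube is the product of its projections, which are order-connected. -/
lemma cube_rep {n : ℕ} {D : Set (Fin n → ℝ)} (hD : IsCube D) (hne : D.Nonempty) :
    (∀ i, ((fun x => x i) '' D).OrdConnected) ∧ D = Set.pi Set.univ (fun i => (fun x => x i) '' D) := by
  obtain ⟨I, hI, rfl⟩ := hD
  have : ∀ i, (fun x : Fin n → ℝ => x i) '' Set.pi Set.univ I = I i := fun i =>
    Set.eval_image_pi (mem_univ i) hne
  constructor
  · intro i; rw [this i]; exact hI i
  · exact (Set.pi_congr rfl (fun i _ => (this i).symm))

lemma exists_maxsubcube {n : ℕ} {M X : Set (Fin n → ℝ)} (hM : IsCube M) (hne : M.Nonempty)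
    (hMX : M ⊆ X) : ∃ D, M ⊆ D ∧ IsMaxSubcube D X := by
  classical
  set S : Set (Set (Fin n → ℝ)) := {D | IsCube D ∧ M ⊆ D ∧ D ⊆ X} with hS
  have hzorn : ∀ c ⊆ S, IsChain (· ⊆ ·) c → c.Nonempty →
      ∃ ub ∈ S, ∀ s ∈ c, s ⊆ ub := by
    intro c hcS hchain hcne
    refine ⟨⋃₀ c, ?_, fun s hs => subset_sUnion_of_mem hs⟩
    have hneD : ∀ D ∈ c, D.Nonempty := fun D hD => hne.mono (hcS hD).2.1
    have hrep : ∀ D ∈ c, (∀ i, ((fun x => x i) '' D).OrdConnected) ∧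
        D = Set.pi Set.univ (fun i => (fun x => x i) '' D) :=
      fun D hD => cube_rep (hcS hD).1 (hneD D hD)
    obtain ⟨D₀, hD₀⟩ := hcne
    refine ⟨⟨fun i => ⋃ D ∈ c, (fun x => x i) '' D, ?_, ?_⟩, ?_, ?_⟩
    · -- each union of projections is ord-connected
      intro i
      constructor
      intro x hx y hy
      simp only [mem_iUnion] at hx hy
      obtain ⟨Da, hDa, hxa⟩ := hx
      obtain ⟨Db, hDb, hyb⟩ := hy
      rcases hchain.total hDa hDb with hab | hba
      · have : Icc x y ⊆ (fun x => x i) '' Db :=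
          ((hrep Db hDb).1 i).out (image_mono hab hxa) hyb
        exact this.trans (subset_iUnion₂_of_subset Db hDb subset_rfl)
      · have : Icc x y ⊆ (fun x => x i) '' Da :=
          ((hrep Da hDa).1 i).out hxa (image_mono hba hyb)
        exact this.trans (subset_iUnion₂_of_subset Da hDa subset_rfl)
    · -- ⋃₀ c equals the product
      apply Subset.antisymm
      · rintro z ⟨D, hD, hzD⟩ i _
        exact mem_iUnion₂_of_mem hD ⟨z, hzD, rfl⟩
      · intro z hz
        have : ∀ i, ∃ D ∈ c, z i ∈ (fun x => x i) '' D := by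
          intro i
          have := hz i (mem_univ i)
          simp only [mem_iUnion, exists_prop] at this
          exact this
        choose f hf hf2 using this
        -- find an upper bound in the chain of all f i together with D₀
        obtain ⟨Dm, hDm, hDmsup⟩ := Finset.sup_le_of_le_directed c ⟨D₀, hD₀⟩
          hchain.directedOn (insert D₀ (Finset.univ.image f))
          (by
            intro x hx
            simp only [Finset.mem_insert, Finset.mem_image, Finset.mem_univ, true_and] at hx
            refine ⟨x, ?_, le_refl _⟩
            rcases hx with h | ⟨i, h⟩
            · rw [h]; exact hD₀
            · rw [← h]; exact hf i)
        have hsub : ∀ i, f i ⊆ Dm := by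
          intro i
          refine le_trans ?_ hDmsup
          exact Finset.le_sup (f := id)
            (Finset.mem_insert_of_mem (Finset.mem_image_of_mem f (Finset.mem_univ i)))
        have hz' : ∀ i, z i ∈ (fun x => x i) '' Dm := by
          intro i
          exact image_mono (hsub i) (hf2 i)
        have := (hrep Dm hDm).2
        exact ⟨Dm, hDm, by rw [this]; exact fun i _ => hz' i⟩
    · exact le_trans (hcS hD₀).2.1 (subset_sUnion_of_mem hD₀)
    · exact sUnion_subset fun D hD => (hcS hD).2.2
  obtain ⟨m, hMm, hm⟩ := zorn_subset_nonempty S hzorn M ⟨hM, subset_rfl, hMX⟩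
  refine ⟨m, hMm, hm.prop.1, hm.prop.2.2, ?_⟩
  intro C' hC' hC'X hmC'
  exact hm.eq_of_subset ⟨hC', hMm.trans hmC', hC'X⟩ hmC'

def CubicalArea {n : ℕ} (X : Set (Fin n → ℝ)) : Prop :=
  ∃ 𝒞 : Finset (Set (Fin n → ℝ)), (∀ C ∈ 𝒞, IsCube C) ∧ ⋃₀ ↑𝒞 = X

/-- A maximal subinterval of `X ⊆ ℝ`: an interval contained in `X`, maximal for inclusion. -/
def IsMaxSubinterval (J X : Set ℝ) : Prop :=
  J.OrdConnected ∧ J ⊆ X ∧ ∀ J', J'.OrdConnected → J' ⊆ X → J ⊆ J' → J = J'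

/-- If `𝒞` and `𝒞'` contain all the maximal subcubes of their unions, then the family
of pairwise intersections contains all maximal subcubes of `⋃₀ 𝒞 ∩ ⋃₀ 𝒞'`. -/
theorem stmt3 {n : ℕ} (𝒞 𝒞' : Set (Set (Fin n → ℝ)))
    (h1 : ∀ C ∈ 𝒞, IsCube C) (h1' : ∀ C ∈ 𝒞', IsCube C)
    (h2 : ∀ M, IsMaxSubcube M (⋃₀ 𝒞) → M ∈ 𝒞)
    (h2' : ∀ M, IsMaxSubcube M (⋃₀ 𝒞') → M ∈ 𝒞') :
    ∀ M, IsMaxSubcube M (⋃₀ 𝒞 ∩ ⋃₀ 𝒞') →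
      M ∈ {D | ∃ C ∈ 𝒞, ∃ C' ∈ 𝒞', D = C ∩ C'} := by
  intro M hM
  obtain ⟨hMcube, hMsub, hMmax⟩ := hM
  rcases M.eq_empty_or_nonempty with hMe | hMne
  · -- M is empty: X ∩ X' contains no nonempty cube; pick any C ∈ 𝒞, C' ∈ 𝒞'
    have hCne : 𝒞.Nonempty := by
      by_contra h
      rw [not_nonempty_iff_eq_empty] at h
      have : (∅ : Set (Fin n → ℝ)) ∈ 𝒞 := by
        apply h2
        refine ⟨hMe ▸ hMcube, by simp [h], ?_⟩
        intro C' _ hC' _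
        simp only [h, sUnion_empty, subset_empty_iff] at hC'
        exact hC'.symm
      simp [h] at this
    have hC'ne : 𝒞'.Nonempty := by
      by_contra h
      rw [not_nonempty_iff_eq_empty] at h
      have : (∅ : Set (Fin n → ℝ)) ∈ 𝒞' := by
        apply h2'
        refine ⟨hMe ▸ hMcube, by simp [h], ?_⟩
        intro C' _ hC' _
        simp only [h, sUnion_empty, subset_empty_iff] at hC'
        exact hC'.symm
      simp [h] at this
    obtain ⟨C, hC⟩ := hCne
    obtain ⟨C', hC'⟩ := hC'ne
    refine ⟨C, hC, C', hC', ?_⟩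
    apply hMmax
    · exact isCube_inter (h1 C hC) (h1' C' hC')
    · exact inter_subset_inter (subset_sUnion_of_mem hC) (subset_sUnion_of_mem hC')
    · rw [hMe]; exact empty_subset _
  · -- M is nonempty: enlarge M to maximal subcubes of each union
    obtain ⟨C, hMC, hCmax⟩ := exists_maxsubcube hMcube hMne (hMsub.trans inter_subset_left)
    obtain ⟨C', hMC', hC'max⟩ := exists_maxsubcube hMcube hMne (hMsub.trans inter_subset_right)
    refine ⟨C, h2 C hCmax, C', h2' C' hC'max, ?_⟩
    apply hMmax
    · exact isCube_inter hCmax.1 hC'max.1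
    · exact inter_subset_inter hCmax.2.1 hC'max.2.1
    · exact subset_inter hMC hMC'
end

section
/- Every maximal subcube of the complement of an n-cube I₁ × ⋯ × Iₙ in ℝ^n is of the form ℝ × ⋯ × J_k × ⋯ × ℝ, where J_k (in position k) is a maximal subinterval of the complement of I_k in ℝ. -/
open Set

/-- slab as a cube -/
lemma slab_eq {n : ℕ} (k : Fin n) (J' : Set ℝ) :
    {x : Fin n → ℝ | x k ∈ J'} = Set.pi Set.univ (fun i => if i = k then J' else Set.univ) := by
  ext x
  simp only [Set.mem_setOf_eq, Set.mem_pi, Set.mem_univ, forall_true_left]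
  constructor
  · intro h i
    split_ifs with hik
    · subst hik; exact h
    · trivial
  · intro h
    have := h k
    simpa using this

/-- Every maximal subcube of the complement of a cube `I₁ × ⋯ × Iₙ` is of the form
`ℝ × ⋯ × J_k × ⋯ × ℝ` with `J_k` a maximal subinterval of `(I_k)ᶜ`. -/
theorem stmt4 {n : ℕ} (I : Fin n → Set ℝ) (hI : ∀ i, (I i).OrdConnected)
    (C : Set (Fin n → ℝ)) (hC : IsMaxSubcube C (Set.pi Set.univ I)ᶜ) :
    ∃ k : Fin n, ∃ J : Set ℝ, IsMaxSubinterval J (I k)ᶜ ∧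
      C = {x : Fin n → ℝ | x k ∈ J} := by
  obtain ⟨⟨J, hJord, rfl⟩, hsub, hmax⟩ := hC
  by_cases hne : ∀ i, (J i).Nonempty
  · -- all factors nonempty
    have hk : ∃ k, ∀ t, t ∈ J k → t ∉ I k := by
      by_contra h
      push_neg at h
      choose b hb1 hb2 using h
      exact hsub (fun i _ => hb1 i) (fun i _ => hb2 i)
    obtain ⟨k, hk⟩ := hk
    -- key: any interval extending J k inside (I k)ᶜ gives the same slab
    have key : ∀ J' : Set ℝ, J'.OrdConnected → J' ⊆ (I k)ᶜ → J k ⊆ J' →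
        Set.pi Set.univ J = {x : Fin n → ℝ | x k ∈ J'} := by
      intro J' hord hsub' hJJ
      refine hmax _ ?_ ?_ ?_
      · exact ⟨fun i => if i = k then J' else Set.univ, by
          intro i; dsimp only; split_ifs; exacts [hord, Set.ordConnected_univ], slab_eq k J'⟩
      · intro x hx hxI
        exact hsub' hx (hxI k (Set.mem_univ k))
      · intro x hx
        exact hJJ (hx k (Set.mem_univ k))
    have hJkc : J k ⊆ (I k)ᶜ := fun t ht => hk t ht
    refine ⟨k, J k, ⟨hJord k, hJkc, ?_⟩, key (J k) (hJord k) hJkc (subset_refl _)⟩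
    intro J' h1 h2 h3
    have e1 := key (J k) (hJord k) hJkc (subset_refl _)
    have e2 := key J' h1 h2 h3
    have e3 : {x : Fin n → ℝ | x k ∈ J k} = {x : Fin n → ℝ | x k ∈ J'} := e1 ▸ e2
    ext t
    have := Set.ext_iff.1 e3 (fun i => if i = k then t else 0)
    simpa using this
  · -- some factor is empty
    push_neg at hne
    obtain ⟨i0, hi0⟩ := hne
    have hCempty : Set.pi Set.univ J = ∅ := Set.univ_pi_eq_empty hi0
    have hcomp : (Set.pi Set.univ I)ᶜ = ∅ := by
      by_contra h
      obtain ⟨p, hp⟩ := Set.nonempty_iff_ne_empty.2 h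
      have hpt : Set.pi Set.univ J = Set.pi Set.univ (fun i => ({p i} : Set ℝ)) := by
        refine hmax _ ⟨fun i => {p i}, fun i => Set.ordConnected_singleton, rfl⟩ ?_ ?_
        · intro x hx
          have : x = p := funext fun i => hx i (Set.mem_univ i)
          rwa [this]
        · rw [hCempty]; exact Set.empty_subset _
      have : p ∈ Set.pi Set.univ J := by
        rw [hpt]; exact fun i _ => rfl
      rw [hCempty] at this
      exact this
    have hIuniv : I i0 = Set.univ := by
      have : Set.pi Set.univ I = Set.univ := Set.compl_empty_iff.mp hcomp
      ext t
      simp only [Set.mem_univ, iff_true]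
      have : (fun _ => t : Fin n → ℝ) ∈ Set.pi Set.univ I := this ▸ Set.mem_univ _
      exact this i0 (Set.mem_univ i0)
    refine ⟨i0, ∅, ⟨Set.ordConnected_empty, Set.empty_subset _, ?_⟩, ?_⟩
    · intro J' _ h2 _
      rw [hIuniv] at h2
      simp only [Set.compl_univ, Set.subset_empty_iff] at h2
      exact h2.symm
    · rw [hCempty]
      ext x; simp
end

section
/- The complement in ℝ^n of any n-cube has at most 2n maximal subcubes. -/
open Set

/-- Points strictly below every point of `I`. -/
def lowSide (I : Set ℝ) : Set ℝ := {x | ∀ y ∈ I, x < y}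

/-- Points strictly above every point of `I`. -/
def highSide (I : Set ℝ) : Set ℝ := {x | ∀ y ∈ I, y < x}

lemma lowSide_ordConnected (I : Set ℝ) : (lowSide I).OrdConnected :=
  ⟨fun _ _ b hb z hz y hy => lt_of_le_of_lt hz.2 (hb y hy)⟩

lemma highSide_ordConnected (I : Set ℝ) : (highSide I).OrdConnected :=
  ⟨fun a ha _ _ z hz y hy => lt_of_lt_of_le (ha y hy) hz.1⟩

lemma cyl_isCube {n : ℕ} (i : Fin n) (S : Set ℝ) (hS : S.OrdConnected) :
    IsCube {x : Fin n → ℝ | x i ∈ S} := by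
  refine ⟨Function.update (fun _ => (univ : Set ℝ)) i S, fun j => ?_, ?_⟩
  · rcases eq_or_ne j i with rfl | hne
    · simpa using hS
    · simpa [Function.update_of_ne hne] using Set.ordConnected_univ
  · ext x
    simp only [mem_setOf_eq, Set.mem_pi, mem_univ, forall_true_left]
    constructor
    · intro hx j
      rcases eq_or_ne j i with rfl | hne
      · simpa using hx
      · simp [Function.update_of_ne hne]
    · intro hx
      simpa using hx i

lemma side_lemma {J I : Set ℝ} (hJ : J.OrdConnected) (hI : I.OrdConnected)
    (hdisj : ∀ x ∈ J, x ∉ I) :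
    (∀ x ∈ J, ∀ y ∈ I, x < y) ∨ (∀ x ∈ J, ∀ y ∈ I, y < x) := by
  by_cases h : ∃ x ∈ J, ∃ y ∈ I, y < x
  · right
    obtain ⟨x, hx, y, hy, hyx⟩ := h
    intro z hz w hw
    by_contra hzw
    have hzw : z ≤ w := not_lt.mp hzw
    rcases le_or_gt y z with h1 | h1
    · exact hdisj z hz (hI.out hy hw ⟨h1, hzw⟩)
    · exact hdisj y (hJ.out hz hx ⟨h1.le, hyx.le⟩) hy
  · left
    push_neg at h
    intro x hx y hy
    rcases lt_or_eq_of_le (h x hx y hy) with h1 | h1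
    · exact h1
    · exact absurd (h1 ▸ hy) (hdisj x hx)

/-- The complement of an `n`-cube has at most `2n` maximal subcubes. -/
theorem stmt5 {n : ℕ} (C : Set (Fin n → ℝ)) (hC : IsCube C) :
    {M | IsMaxSubcube M Cᶜ}.Finite ∧ {M | IsMaxSubcube M Cᶜ}.ncard ≤ 2 * n := by
  classical
  obtain ⟨I, hIord, rfl⟩ := hC
  rcases Nat.eq_zero_or_pos n with hn | hn
  · subst hn
    have hempty : {M | IsMaxSubcube M (Set.pi univ I)ᶜ} = ∅ := by
      ext M
      simp only [mem_setOf_eq, mem_empty_iff_false, iff_false]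
      rintro ⟨⟨J, -, rfl⟩, hsub, -⟩
      have h1 : (fun _ : Fin 0 => (0:ℝ)) ∈ Set.pi univ J := fun i _ => i.elim0
      have h2 : (fun _ : Fin 0 => (0:ℝ)) ∈ Set.pi univ I := fun i _ => i.elim0
      exact hsub h1 h2
    rw [hempty]
    simp
  · by_cases hCuniv : Set.pi univ I = univ
    · have hsub : {M | IsMaxSubcube M (Set.pi univ I)ᶜ} ⊆ {(∅ : Set (Fin n → ℝ))} := by
        rintro M ⟨-, hMsub, -⟩
        have : M ⊆ ∅ := by rw [hCuniv, compl_univ] at hMsub; exact hMsub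
        simpa using subset_empty_iff.mp this
      refine ⟨(Set.finite_singleton _).subset hsub, ?_⟩
      have := Set.ncard_le_ncard hsub (Set.finite_singleton _)
      simp only [Set.ncard_singleton] at this
      omega
    · have hCc_ne : ((Set.pi univ I)ᶜ).Nonempty := Set.nonempty_compl.mpr hCuniv
      set f : Fin n × Bool → Set (Fin n → ℝ) :=
        fun p => {x : Fin n → ℝ | x p.1 ∈ cond p.2 (lowSide (I p.1)) (highSide (I p.1))}
        with hf
      have hsub : {M | IsMaxSubcube M (Set.pi univ I)ᶜ} ⊆ Set.range f := by
        rintro M ⟨⟨J, hJord, rfl⟩, hMsub, hMmax⟩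
        have hMne : (Set.pi univ J).Nonempty := by
          rcases (Set.pi univ J).eq_empty_or_nonempty with h | h
          · exfalso
            obtain ⟨x, hx⟩ := hCc_ne
            have hDcube : IsCube (Set.pi univ fun i => ({x i} : Set ℝ)) :=
              ⟨_, fun i => Set.ordConnected_singleton, rfl⟩
            have hDsub : (Set.pi univ fun i => ({x i} : Set ℝ)) ⊆ (Set.pi univ I)ᶜ := by
              intro y hy
              have hyx : y = x := funext fun i => hy i (mem_univ i)
              rw [hyx]; exact hx
            have heq := hMmax _ hDcube hDsub (by rw [h]; exact empty_subset _)
            have hxJ : x ∈ Set.pi univ J := by rw [heq]; exact fun i _ => rfl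
            rw [h] at hxJ; exact hxJ
          · exact h
        have hpiempty : Set.pi univ (fun j => J j ∩ I j) = ∅ := by
          rw [Set.eq_empty_iff_forall_notMem]
          intro x hx
          exact hMsub (fun j hj => (hx j hj).1) (fun j hj => (hx j hj).2)
        obtain ⟨i, hi⟩ := Set.univ_pi_eq_empty_iff.mp hpiempty
        have hdisj : ∀ x ∈ J i, x ∉ I i := fun x hxJ hxI =>
          (Set.eq_empty_iff_forall_notMem.mp hi x) ⟨hxJ, hxI⟩
        rcases side_lemma (hJord i) (hIord i) hdisj with hside | hside
        · refine ⟨(i, true), ?_⟩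
          show {x : Fin n → ℝ | x i ∈ lowSide (I i)} = Set.pi univ J
          refine (hMmax _ (cyl_isCube i _ (lowSide_ordConnected _)) ?_ ?_).symm
          · intro x hx hxC
            exact lt_irrefl _ (hx (x i) (hxC i (mem_univ i)))
          · intro x hx
            exact fun y hy => hside _ (hx i (mem_univ i)) y hy
        · refine ⟨(i, false), ?_⟩
          show {x : Fin n → ℝ | x i ∈ highSide (I i)} = Set.pi univ J
          refine (hMmax _ (cyl_isCube i _ (highSide_ordConnected _)) ?_ ?_).symm
          · intro x hx hxC
            exact lt_irrefl _ (hx (x i) (hxC i (mem_univ i)))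
          · intro x hx
            exact fun y hy => hside _ (hx i (mem_univ i)) y hy
      refine ⟨(Set.finite_range f).subset hsub, ?_⟩
      refine le_trans (Set.ncard_le_ncard hsub (Set.finite_range f)) ?_
      rw [← Set.image_univ]
      refine le_trans (Set.ncard_image_le Set.finite_univ) ?_
      rw [Set.ncard_univ]
      simp [Nat.card_eq_fintype_card]
      omega
end

section
/- A subset of ℝ^n is a cubical area (i.e., admits a finite cubical cover) if and only if it has finitely many maximal subcubes; moreover in that case the maximal subcubes cover it. -/
open Set

/- ### Auxiliary material -/

open Classical in
/-- chosen interval family of a cube -/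
noncomputable def ivals {n : ℕ} (C : Set (Fin n → ℝ)) : Fin n → Set ℝ :=
  if h : IsCube C then h.choose else fun _ => ∅

lemma ivals_spec {n : ℕ} {C : Set (Fin n → ℝ)} (h : IsCube C) :
    (∀ i, (ivals C i).OrdConnected) ∧ C = Set.pi Set.univ (ivals C) := by
  rw [ivals]
  rw [dif_pos h]
  exact h.choose_spec

lemma singleton_isCube {n : ℕ} (x : Fin n → ℝ) : IsCube ({x} : Set (Fin n → ℝ)) := by
  refine ⟨fun i => {x i}, fun i => ordConnected_singleton, ?_⟩
  ext y
  simp only [mem_singleton_iff, mem_pi, mem_univ, forall_true_left]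
  constructor
  · rintro rfl i; rfl
  · intro h; funext i; exact h i

lemma pi_component_subset {n : ℕ} {J K : Fin n → Set ℝ}
    (hne : (Set.pi Set.univ J).Nonempty) (hsub : Set.pi Set.univ J ⊆ Set.pi Set.univ K) :
    ∀ i, J i ⊆ K i := by
  intro i t ht
  obtain ⟨x, hx⟩ := hne
  have hupd : Function.update x i t ∈ Set.pi Set.univ J := by
    intro j _
    rcases eq_or_ne j i with rfl | hji
    · simpa using ht
    · simpa [Function.update_of_ne hji] using hx j (mem_univ j)
  have := hsub hupd i (mem_univ i)
  simpa using this

lemma proj_pi {n : ℕ} {J : Fin n → Set ℝ} (hne : (Set.pi Set.univ J).Nonempty) (i : Fin n) :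
    (fun x => x i) '' (Set.pi Set.univ J) = J i := by
  apply Subset.antisymm
  · rintro _ ⟨x, hx, rfl⟩
    exact hx i (mem_univ i)
  · intro t ht
    obtain ⟨x, hx⟩ := hne
    refine ⟨Function.update x i t, ?_, by simp⟩
    intro j _
    rcases eq_or_ne j i with rfl | hji
    · simpa using ht
    · simpa [Function.update_of_ne hji] using hx j (mem_univ j)

lemma chain_max {α : Type*} {c : Set (Set α)} (hc : IsChain (· ⊆ ·) c)
    {s : Set (Set α)} (hs : s.Finite) (hsc : s ⊆ c) (hne : s.Nonempty) :
    ∃ D ∈ s, ∀ A ∈ s, A ⊆ D := by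
  obtain ⟨D, hD, hmax⟩ := Set.Finite.exists_maximalFor id s hs hne
  refine ⟨D, hD, fun A hA => ?_⟩
  rcases eq_or_ne A D with rfl | hAD
  · exact subset_rfl
  · rcases hc (hsc hA) (hsc hD) hAD with h | h
    · exact h
    · exact hmax hA h

/-- The union of a nonempty chain of cubes is a cube. -/
lemma chain_sUnion_isCube {n : ℕ} {c : Set (Set (Fin n → ℝ))}
    (hc : IsChain (· ⊆ ·) c) (hcube : ∀ C ∈ c, IsCube C) (hne : c.Nonempty) :
    IsCube (⋃₀ c) := by
  classical
  set c' : Set (Set (Fin n → ℝ)) := {C ∈ c | C.Nonempty} with hc'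
  by_cases hc'ne : c'.Nonempty
  · set J : Fin n → Set ℝ := fun i => ⋃ C ∈ c', ivals C i with hJ
    have hcomp : ∀ C ∈ c', ∀ D ∈ c', C ⊆ D → ∀ i, ivals C i ⊆ ivals D i := by
      intro C hC D hD hCD i
      have hCc := (ivals_spec (hcube C hC.1)).2
      have hDc := (ivals_spec (hcube D hD.1)).2
      refine pi_component_subset ?_ ?_ i
      · rw [← hCc]; exact hC.2
      · rw [← hCc, ← hDc]; exact hCD
    refine ⟨J, ?_, ?_⟩
    · -- each J i is OrdConnected
      intro i
      constructor
      intro a ha b hb y hy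
      simp only [hJ, mem_iUnion] at ha hb ⊢
      obtain ⟨C₁, hC₁, ha⟩ := ha
      obtain ⟨C₂, hC₂, hb⟩ := hb
      obtain ⟨D, hD, hDall⟩ := chain_max hc
        (Set.toFinite {C₁, C₂}) (by rintro A (rfl | rfl) <;> [exact hC₁.1; exact hC₂.1])
        ⟨C₁, by simp⟩
      have hDc' : D ∈ c' := by
        rcases hD with rfl | rfl
        · exact hC₁
        · exact hC₂
      have ha' : a ∈ ivals D i := hcomp C₁ hC₁ D hDc' (hDall C₁ (by simp)) i ha
      have hb' : b ∈ ivals D i := hcomp C₂ hC₂ D hDc' (hDall C₂ (by simp)) i hb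
      exact ⟨D, hDc', ((ivals_spec (hcube D hDc'.1)).1 i).out ha' hb' hy⟩
    · apply Subset.antisymm
      · rintro x ⟨C, hC, hx⟩
        have hCc' : C ∈ c' := ⟨hC, ⟨x, hx⟩⟩
        have := (ivals_spec (hcube C hC)).2
        rw [this] at hx
        intro i _
        exact mem_iUnion₂.mpr ⟨C, hCc', hx i (mem_univ i)⟩
      · intro x hx
        have hxi : ∀ i, ∃ C ∈ c', x i ∈ ivals C i := by
          intro i
          have := hx i (mem_univ i)
          simpa [hJ, mem_iUnion] using this
        choose g hg hxg using hxi
        obtain ⟨C₀, hC₀⟩ := hc'ne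
        obtain ⟨D, hD, hDall⟩ := chain_max hc
          (Set.toFinite (insert C₀ (Set.range g)))
          (by
            rintro A (rfl | ⟨i, rfl⟩)
            · exact hC₀.1
            · exact (hg i).1)
          ⟨C₀, by simp⟩
        have hDc' : D ∈ c' := by
          rcases hD with rfl | ⟨i, rfl⟩
          · exact hC₀
          · exact hg i
        have hxD : x ∈ D := by
          rw [(ivals_spec (hcube D hDc'.1)).2]
          intro i _
          exact hcomp (g i) (hg i) D hDc' (hDall (g i) (Set.mem_insert_iff.mpr (Or.inr ⟨i, rfl⟩))) i (hxg i)
        exact ⟨D, hDc'.1, hxD⟩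
  · -- all members of c are empty
    obtain ⟨C, hC⟩ := hne
    have hCe : C = ∅ := by
      by_contra h
      exact hc'ne ⟨C, hC, nonempty_iff_ne_empty.mpr h⟩
    have : ⋃₀ c = ∅ := by
      apply eq_empty_iff_forall_notMem.mpr
      rintro x ⟨A, hA, hx⟩
      exact hc'ne ⟨A, hA, ⟨x, hx⟩⟩
    rw [this, ← hCe]
    exact hcube C hC

/-- Every point of `X` lies in a maximal subcube; the maximal subcubes cover `X`. -/
lemma maxsub_cover {n : ℕ} (X : Set (Fin n → ℝ)) :
    ⋃₀ {C | IsMaxSubcube C X} = X := by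
  apply Subset.antisymm
  · rintro x ⟨C, hC, hx⟩
    exact hC.2.1 hx
  · intro x hx
    set S : Set (Set (Fin n → ℝ)) := {C | IsCube C ∧ C ⊆ X} with hS
    have hxS : ({x} : Set (Fin n → ℝ)) ∈ S := ⟨singleton_isCube x, by simpa using hx⟩
    obtain ⟨m, hxm, hm⟩ := zorn_subset_nonempty S
      (fun c hcS hc hcne =>
        ⟨⋃₀ c, ⟨chain_sUnion_isCube hc (fun C hC => (hcS hC).1) hcne,
          sUnion_subset fun C hC => (hcS hC).2⟩, fun s hs => subset_sUnion_of_mem hs⟩)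
      {x} hxS
    refine ⟨m, ⟨hm.prop.1, hm.prop.2, ?_⟩, hxm rfl⟩
    intro C' hC' hC'X hmC'
    exact hm.eq_of_subset ⟨hC', hC'X⟩ hmC'
/- ### Atoms with respect to a finite set of endpoints -/

/-- `s` and `t` lie in the same atom of the partition of `ℝ` induced by `E`. -/
def SameSide (E : Set ℝ) (s t : ℝ) : Prop :=
  ∀ e ∈ E, (s ≤ e ↔ t ≤ e) ∧ (e ≤ s ↔ e ≤ t)

lemma sameSide_refl (E : Set ℝ) (s : ℝ) : SameSide E s s := fun _ _ => ⟨Iff.rfl, Iff.rfl⟩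

lemma sameSide_symm {E : Set ℝ} {s t : ℝ} (h : SameSide E s t) : SameSide E t s :=
  fun e he => ⟨(h e he).1.symm, (h e he).2.symm⟩

/-- Absorption: an interval whose (existing) endpoints lie in `E` absorbs whole atoms. -/
lemma sameSide_absorb {E I : Set ℝ} (hI : I.OrdConnected)
    (hlo : I.Nonempty → BddBelow I → sInf I ∈ E)
    (hhi : I.Nonempty → BddAbove I → sSup I ∈ E)
    {t s : ℝ} (ht : t ∈ I) (h : SameSide E s t) : s ∈ I := by
  rcases lt_trichotomy s t with hst | rfl | hst
  · by_contra hs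
    have hub : ∀ u ∈ I, s < u := by
      intro u hu
      by_contra hle
      exact hs (hI.out hu ht ⟨le_of_not_gt hle, hst.le⟩)
    have hbdd : BddBelow I := ⟨s, fun u hu => (hub u hu).le⟩
    have hne : I.Nonempty := ⟨t, ht⟩
    have he : sInf I ∈ E := hlo hne hbdd
    have h1 : s ≤ sInf I := le_csInf hne fun u hu => (hub u hu).le
    have h2 : sInf I ≤ t := csInf_le hbdd ht
    have h3 : t ≤ sInf I := ((h _ he).1).mp h1
    have h4 : sInf I ≤ s := ((h _ he).2).mpr h2
    exact absurd (h3.trans h4) (not_le.mpr hst)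
  · exact ht
  · by_contra hs
    have hub : ∀ u ∈ I, u < s := by
      intro u hu
      by_contra hle
      exact hs (hI.out ht hu ⟨hst.le, le_of_not_gt hle⟩)
    have hbdd : BddAbove I := ⟨s, fun u hu => (hub u hu).le⟩
    have hne : I.Nonempty := ⟨t, ht⟩
    have he : sSup I ∈ E := hhi hne hbdd
    have h1 : sSup I ≤ s := csSup_le hne fun u hu => (hub u hu).le
    have h2 : t ≤ sSup I := le_csSup hbdd ht
    have h3 : sSup I ≤ t := ((h _ he).2).mp h1
    have h4 : s ≤ sSup I := ((h _ he).1).mpr h2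
    exact absurd (h4.trans h3) (not_le.mpr hst)

lemma sameSide_between₁ {E : Set ℝ} {a b y : ℝ} (h : SameSide E a b)
    (h1 : a ≤ y) (h2 : y ≤ b) : SameSide E y b := by
  intro e he
  constructor
  · constructor
    · intro hy
      exact ((h e he).1).mp (h1.trans hy)
    · intro hb
      exact h2.trans hb
  · constructor
    · intro hy
      exact (hy.trans h2)
    · intro hb
      exact (((h e he).2).mpr hb).trans h1

lemma sameSide_between₂ {E : Set ℝ} {a b y : ℝ} (h : SameSide E a b)
    (h1 : b ≤ y) (h2 : y ≤ a) : SameSide E y b := by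
  intro e he
  constructor
  · constructor
    · intro hy
      exact h1.trans hy
    · intro hb
      exact h2.trans (((h e he).1).mpr hb)
  · constructor
    · intro hy
      exact ((h e he).2).mp (hy.trans h2)
    · intro hb
      exact hb.trans h1

/-- Saturation of a set under `SameSide E`. -/
def satE (E J : Set ℝ) : Set ℝ := {s | ∃ t ∈ J, SameSide E s t}

lemma subset_satE {E J : Set ℝ} : J ⊆ satE E J :=
  fun t ht => ⟨t, ht, sameSide_refl E t⟩

lemma satE_ordConnected {E J : Set ℝ} (hJ : J.OrdConnected) : (satE E J).OrdConnected := by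
  constructor
  rintro x ⟨t₁, ht₁, hx⟩ z ⟨t₂, ht₂, hz⟩ y hy
  obtain ⟨hxy, hyz⟩ := hy
  rcases le_or_gt y t₁ with h1 | h1
  · exact ⟨t₁, ht₁, sameSide_between₁ hx hxy h1⟩
  · rcases le_or_gt t₂ y with h2 | h2
    · exact ⟨t₂, ht₂, sameSide_between₂ hz h2 hyz⟩
    · exact subset_satE (hJ.out ht₁ ht₂ ⟨h1.le, h2.le⟩)

/-- A cubical area has finitely many maximal subcubes. -/
lemma cubicalArea_finite_max {n : ℕ} {X : Set (Fin n → ℝ)} (h : CubicalArea X) :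
    {C | IsMaxSubcube C X}.Finite := by
  classical
  obtain ⟨𝒞, hcubes, hcover⟩ := h
  set E : Fin n → Set ℝ := fun i => ⋃ C ∈ 𝒞, {sInf (ivals C i), sSup (ivals C i)} with hE
  have hEfin : ∀ i, (E i).Finite := by
    intro i
    apply Set.Finite.biUnion (𝒞 : Finset _).finite_toSet
    intro C _
    exact Set.toFinite _
  have hEmem : ∀ C ∈ 𝒞, ∀ i, sInf (ivals C i) ∈ E i ∧ sSup (ivals C i) ∈ E i := by
    intro C hC i
    constructor <;> [skip; skip] <;>
      · refine mem_iUnion₂.mpr ⟨C, hC, ?_⟩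
        simp
  -- the saturation of a subcube of X is still inside X
  have key : ∀ J : Fin n → Set ℝ, Set.pi Set.univ J ⊆ X →
      Set.pi Set.univ (fun i => satE (E i) (J i)) ⊆ X := by
    intro J hJX y hy
    have hyi : ∀ i, ∃ t ∈ J i, SameSide (E i) (y i) t := fun i => hy i (mem_univ i)
    choose t ht hrel using hyi
    have htX : t ∈ X := hJX (fun i _ => ht i)
    rw [← hcover] at htX
    obtain ⟨C₀, hC₀, htC₀⟩ := htX
    have hspec := ivals_spec (hcubes C₀ hC₀)
    rw [hspec.2] at htC₀
    have hyC₀ : y ∈ Set.pi Set.univ (ivals C₀) := by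
      intro i _
      refine sameSide_absorb (hspec.1 i) ?_ ?_ (htC₀ i (mem_univ i)) (hrel i)
      · intro _ _; exact (hEmem C₀ hC₀ i).1
      · intro _ _; exact (hEmem C₀ hC₀ i).2
    rw [← hcover]
    exact ⟨C₀, hC₀, hspec.2 ▸ hyC₀⟩
  -- nonempty maximal subcubes are products of their (saturated) projections
  have hproj : ∀ C, IsMaxSubcube C X → C.Nonempty →
      (C = Set.pi Set.univ (fun i => (fun x => x i) '' C)) ∧
      ∀ i s t, t ∈ (fun x => x i) '' C → SameSide (E i) s t → s ∈ (fun x => x i) '' C := by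
    intro C hC hne
    obtain ⟨J, hJord, rfl⟩ := hC.1
    have hPJ : ∀ i, (fun x => x i) '' (Set.pi Set.univ J) = J i := proj_pi hne
    have hsub : Set.pi Set.univ J ⊆ Set.pi Set.univ (fun i => satE (E i) (J i)) :=
      fun x hx i _ => subset_satE (hx i (mem_univ i))
    have heq : Set.pi Set.univ J = Set.pi Set.univ (fun i => satE (E i) (J i)) :=
      hC.2.2 _ ⟨_, fun i => satE_ordConnected (hJord i), rfl⟩ (key J hC.2.1) hsub
    have hsat : ∀ i, satE (E i) (J i) ⊆ J i :=
      pi_component_subset (heq ▸ hne) heq.symm.subset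
    constructor
    · have hfe : (fun i => (fun x => x i) '' Set.pi Set.univ J) = J := funext hPJ
      rw [hfe]
    · intro i s u humem hrel
      rw [hPJ i] at humem ⊢
      exact hsat i ⟨u, humem, hrel⟩
  -- the coding map
  set Q : Fin n → ℝ → Set ℝ × Set ℝ :=
    fun i s => ({e ∈ E i | s ≤ e}, {e ∈ E i | e ≤ s}) with hQ
  have hQrel : ∀ i s t, Q i s = Q i t → SameSide (E i) s t := by
    intro i s u hq e he
    have h1 := Set.ext_iff.mp (congrArg Prod.fst hq) e
    have h2 := Set.ext_iff.mp (congrArg Prod.snd hq) e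
    simp only [hQ, mem_sep_iff] at h1 h2
    exact ⟨⟨fun hs => (h1.mp ⟨he, hs⟩).2, fun hu => (h1.mpr ⟨he, hu⟩).2⟩,
           ⟨fun hs => (h2.mp ⟨he, hs⟩).2, fun hu => (h2.mpr ⟨he, hu⟩).2⟩⟩
  set f : Set (Fin n → ℝ) → (Fin n → Set (Set ℝ × Set ℝ)) :=
    fun C i => Q i '' ((fun x => x i) '' C) with hf
  set M' : Set (Set (Fin n → ℝ)) := {C | IsMaxSubcube C X ∧ C.Nonempty} with hM'
  have hTfin : ∀ i : Fin n, ({p : Set ℝ × Set ℝ | p.1 ⊆ E i ∧ p.2 ⊆ E i}).Finite := by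
    intro i
    apply Set.Finite.subset (((hEfin i).finite_subsets).prod ((hEfin i).finite_subsets))
    intro p hp
    exact ⟨hp.1, hp.2⟩
  have him : (f '' M').Finite := by
    apply Set.Finite.subset (Set.Finite.pi (fun i : Fin n => (hTfin i).finite_subsets))
    rintro _ ⟨C, _, rfl⟩
    intro i _
    rintro _ ⟨s, _, rfl⟩
    exact ⟨fun e he => he.1, fun e he => he.1⟩
  have step : ∀ C' D' : Set (Fin n → ℝ), C' ∈ M' → D' ∈ M' → f C' = f D' →
      ∀ i, (fun x => x i) '' C' ⊆ (fun x => x i) '' D' := by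
    intro C' D' hC' hD' hfe i s hs
    have hmem : Q i s ∈ f D' i := by
      rw [← hfe]
      exact ⟨s, hs, rfl⟩
    obtain ⟨u, huD, hQu⟩ := hmem
    exact (hproj D' hD'.1 hD'.2).2 i s u huD (sameSide_symm (hQrel i u s hQu))
  have hinj : Set.InjOn f M' := by
    intro C hC D hD hfCD
    have hPeq : (fun i => (fun x => x i) '' C) = (fun i => (fun x => x i) '' D) :=
      funext fun i => Subset.antisymm (step C D hC hD hfCD i) (step D C hD hC hfCD.symm i)
    calc C = Set.pi Set.univ (fun i => (fun x => x i) '' C) := (hproj C hC.1 hC.2).1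
      _ = Set.pi Set.univ (fun i => (fun x => x i) '' D) := by rw [hPeq]
      _ = D := ((hproj D hD.1 hD.2).1).symm
  have hM'fin : M'.Finite := Set.Finite.of_finite_image him hinj
  have hsub : {C | IsMaxSubcube C X} ⊆ insert ∅ M' := by
    intro C hC
    rcases eq_empty_or_nonempty C with rfl | hne
    · exact mem_insert _ _
    · exact mem_insert_of_mem _ ⟨hC, hne⟩
  exact (hM'fin.insert ∅).subset hsub

/-- A subset of `ℝⁿ` is a cubical area iff it has finitely many maximal subcubes;
in that case the maximal subcubes cover it. -/
theorem stmt7 {n : ℕ} (X : Set (Fin n → ℝ)) :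
    (CubicalArea X ↔ {C | IsMaxSubcube C X}.Finite) ∧
    (CubicalArea X → ⋃₀ {C | IsMaxSubcube C X} = X) := by
  refine ⟨⟨cubicalArea_finite_max, ?_⟩, fun _ => maxsub_cover X⟩
  intro hfin
  refine ⟨hfin.toFinset, ?_, ?_⟩
  · intro C hC
    rw [Set.Finite.mem_toFinset] at hC
    exact hC.1
  · rw [Set.Finite.coe_toFinset]
    exact maxsub_cover X
end

section
/- The collection B_{ℝ^n} of all cubical areas of ℝ^n forms a Boolean subalgebra of the powerset of ℝ^n: it contains ∅ and ℝ^n and is closed under binary union, binary intersection, and complementation. -/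
open Set

/-- Points strictly below an interval. -/
def lowSet (S : Set ℝ) : Set ℝ := {x | x ∉ S ∧ ∀ y ∈ S, x ≤ y}

/-- Points strictly above an interval. -/
def highSet (S : Set ℝ) : Set ℝ := {x | x ∉ S ∧ ∀ y ∈ S, y ≤ x}

lemma lowSet_ordConnected (S : Set ℝ) : (lowSet S).OrdConnected := by
  constructor
  rintro a ⟨_, _⟩ b ⟨hb, hb'⟩ c ⟨_, hcb⟩
  refine ⟨fun hc => ?_, fun y hy => hcb.trans (hb' y hy)⟩
  have hbc := hb' c hc
  have : c = b := le_antisymm hcb hbc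
  exact hb (this ▸ hc)

lemma highSet_ordConnected (S : Set ℝ) : (highSet S).OrdConnected := by
  constructor
  rintro a ⟨ha, ha'⟩ b ⟨_, _⟩ c ⟨hac, _⟩
  refine ⟨fun hc => ?_, fun y hy => (ha' y hy).trans hac⟩
  have hca := ha' c hc
  have : c = a := le_antisymm hca hac
  exact ha (this ▸ hc)

lemma compl_eq_low_union_high {S : Set ℝ} (hS : S.OrdConnected) :
    Sᶜ = lowSet S ∪ highSet S := by
  ext x
  constructor
  · intro hx
    by_cases h : ∀ y ∈ S, x ≤ y
    · exact Or.inl ⟨hx, h⟩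
    · push_neg at h
      obtain ⟨y, hy, hyx⟩ := h
      refine Or.inr ⟨hx, fun z hz => ?_⟩
      by_contra h'
      push_neg at h'
      exact hx (hS.out hy hz ⟨hyx.le, h'.le⟩)
  · rintro (⟨h, -⟩ | ⟨h, -⟩) <;> exact h

lemma isCube_coord {n : ℕ} (i : Fin n) {S : Set ℝ} (hS : S.OrdConnected) :
    IsCube {x : Fin n → ℝ | x i ∈ S} := by
  refine ⟨Function.update (fun _ => univ) i S, fun j => ?_, ?_⟩
  · rcases eq_or_ne j i with rfl | h
    · simpa using hS
    · simp only [Function.update_of_ne h]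
      exact ordConnected_univ
  · ext x
    simp only [mem_setOf_eq, mem_pi, mem_univ, forall_true_left]
    constructor
    · intro h j
      rcases eq_or_ne j i with rfl | hj
      · simpa using h
      · simp [Function.update_of_ne hj]
    · intro h
      have := h i
      simpa using this

lemma IsCube.inter {n : ℕ} {C D : Set (Fin n → ℝ)} (hC : IsCube C) (hD : IsCube D) :
    IsCube (C ∩ D) := by
  obtain ⟨I, hI, rfl⟩ := hC
  obtain ⟨J, hJ, rfl⟩ := hD
  exact ⟨fun i => I i ∩ J i, fun i => (hI i).inter (hJ i), (pi_inter_distrib).symm⟩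

lemma CubicalArea.inter {n : ℕ} {X Y : Set (Fin n → ℝ)} (hX : CubicalArea X)
    (hY : CubicalArea Y) : CubicalArea (X ∩ Y) := by
  classical
  obtain ⟨𝒞, h𝒞, rfl⟩ := hX
  obtain ⟨𝒟, h𝒟, rfl⟩ := hY
  refine ⟨(𝒞 ×ˢ 𝒟).image (fun p => p.1 ∩ p.2), ?_, ?_⟩
  · intro C hC
    simp only [Finset.mem_image, Finset.mem_product] at hC
    obtain ⟨⟨A, B⟩, ⟨hA, hB⟩, rfl⟩ := hC
    exact (h𝒞 A hA).inter (h𝒟 B hB)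
  · ext x
    simp only [Finset.coe_image, sUnion_image, mem_iUnion, Finset.mem_coe,
      Finset.mem_product, mem_inter_iff, mem_sUnion]
    constructor
    · rintro ⟨⟨A, B⟩, ⟨hA, hB⟩, hxA, hxB⟩
      exact ⟨⟨A, hA, hxA⟩, ⟨B, hB, hxB⟩⟩
    · rintro ⟨⟨A, hA, hxA⟩, ⟨B, hB, hxB⟩⟩
      exact ⟨⟨A, B⟩, ⟨hA, hB⟩, hxA, hxB⟩

lemma cubicalArea_univ {n : ℕ} : CubicalArea (univ : Set (Fin n → ℝ)) := by
  refine ⟨{univ}, ?_, by simp⟩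
  intro C hC
  simp only [Finset.mem_singleton] at hC
  subst hC
  exact ⟨fun _ => univ, fun _ => ordConnected_univ, by simp⟩

lemma IsCube.compl_area {n : ℕ} {C : Set (Fin n → ℝ)} (hC : IsCube C) :
    CubicalArea Cᶜ := by
  classical
  obtain ⟨I, hI, rfl⟩ := hC
  refine ⟨Finset.image (fun p : Fin n × Bool =>
    {x : Fin n → ℝ | x p.1 ∈ (if p.2 then lowSet (I p.1) else highSet (I p.1))})
    Finset.univ, ?_, ?_⟩
  · intro C hC
    simp only [Finset.mem_image, Finset.mem_univ, true_and] at hC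
    obtain ⟨⟨i, b⟩, rfl⟩ := hC
    cases b
    · exact isCube_coord i (by simpa using highSet_ordConnected (I i))
    · exact isCube_coord i (by simpa using lowSet_ordConnected (I i))
  · ext x
    simp only [Finset.coe_image, Finset.coe_univ, image_univ, sUnion_range, mem_iUnion,
      mem_setOf_eq, mem_compl_iff, mem_pi, mem_univ, forall_true_left, not_forall]
    constructor
    · rintro ⟨⟨i, b⟩, hx⟩
      refine ⟨i, ?_⟩
      cases b <;> simp only [if_true, if_false] at hx
      · exact hx.1
      · exact hx.1
    · rintro ⟨i, hx⟩
      rw [← mem_compl_iff, compl_eq_low_union_high (hI i)] at hx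
      rcases hx with h | h
      · exact ⟨⟨i, true⟩, by simpa using h⟩
      · exact ⟨⟨i, false⟩, by simpa using h⟩

lemma sUnion_compl_area {n : ℕ} (𝒞 : Finset (Set (Fin n → ℝ)))
    (h : ∀ C ∈ 𝒞, IsCube C) : CubicalArea (⋃₀ (↑𝒞 : Set (Set (Fin n → ℝ))))ᶜ := by
  classical
  induction 𝒞 using Finset.induction with
  | empty => simpa using cubicalArea_univ
  | @insert C s _ ih =>
    have h1 : CubicalArea Cᶜ := (h C (Finset.mem_insert_self _ _)).compl_area
    have h2 := ih (fun D hD => h D (Finset.mem_insert_of_mem hD))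
    have heq : (⋃₀ (↑(insert C s) : Set (Set (Fin n → ℝ))))ᶜ
        = Cᶜ ∩ (⋃₀ (↑s : Set (Set (Fin n → ℝ))))ᶜ := by
      rw [Finset.coe_insert, sUnion_insert, compl_union]
    rw [heq]
    exact h1.inter h2

/-- The cubical areas of `ℝⁿ` form a boolean subalgebra of the powerset of `ℝⁿ`. -/
theorem stmt10 {n : ℕ} :
    CubicalArea (∅ : Set (Fin n → ℝ)) ∧
    CubicalArea (Set.univ : Set (Fin n → ℝ)) ∧
    (∀ X Y : Set (Fin n → ℝ), CubicalArea X → CubicalArea Y → CubicalArea (X ∪ Y)) ∧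
    (∀ X Y : Set (Fin n → ℝ), CubicalArea X → CubicalArea Y → CubicalArea (X ∩ Y)) ∧
    (∀ X : Set (Fin n → ℝ), CubicalArea X → CubicalArea Xᶜ) := by
  classical
  refine ⟨⟨∅, by simp, by simp⟩, cubicalArea_univ, ?_, fun X Y hX hY => hX.inter hY, ?_⟩
  · rintro X Y ⟨𝒞, h𝒞, rfl⟩ ⟨𝒟, h𝒟, rfl⟩
    refine ⟨𝒞 ∪ 𝒟, ?_, ?_⟩
    · intro C hC
      rcases Finset.mem_union.mp hC with h | h
      · exact h𝒞 C h
      · exact h𝒟 C h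
    · rw [Finset.coe_union, sUnion_union]
  · rintro X ⟨𝒞, h𝒞, rfl⟩
    exact sUnion_compl_area 𝒞 h𝒞
end

section
/- In the tensor product A ⊗ B of two distributive lattices with zero, taken in the category of semilattices with zero, pure tensors multiply componentwise: (a₁ ⊗ b₁) ∧ (a₂ ⊗ b₂) = (a₁ ∧ a₂) ⊗ (b₁ ∧ b₂). -/
/-- A bimorphism of join-semilattices with zero: separately a sup- and bot-preserving
map in each variable. -/
def SlatzBimorphism {A B T : Type*} [SemilatticeSup A] [OrderBot A]
    [SemilatticeSup B] [OrderBot B] [SemilatticeSup T] [OrderBot T]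
    (i : A → B → T) : Prop :=
  (∀ b, i ⊥ b = ⊥) ∧ (∀ a, i a ⊥ = ⊥) ∧
  (∀ a a' b, i (a ⊔ a') b = i a b ⊔ i a' b) ∧
  (∀ a b b', i a (b ⊔ b') = i a b ⊔ i a b')

/-- `i : A → B → T` exhibits `T` as the tensor product `A ⊗ B` in the category of
join-semilattices with zero: `i` is a bimorphism through which every bimorphism
factors uniquely by a morphism of semilattices with zero. -/
def IsSlatzTensor {A B T : Type*} [SemilatticeSup A] [OrderBot A]
    [SemilatticeSup B] [OrderBot B] [SemilatticeSup T] [OrderBot T]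
    (i : A → B → T) : Prop :=
  SlatzBimorphism i ∧
  ∀ (X : Type) (_ : SemilatticeSup X) (_ : OrderBot X) (f : A → B → X),
    SlatzBimorphism f →
      ∃! h : T → X, (∀ s t : T, h (s ⊔ t) = h s ⊔ h t) ∧ h ⊥ = ⊥ ∧
        ∀ a b, h (i a b) = f a b

section Aux

variable {A B T : Type*} [SemilatticeSup A] [OrderBot A]
    [SemilatticeSup B] [OrderBot B] [SemilatticeSup T] [OrderBot T]

lemma slatz_mono_left {i : A → B → T} (hi : SlatzBimorphism i) {a a' : A} (b : B)
    (hle : a ≤ a') : i a b ≤ i a' b := by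
  have h := hi.2.2.1 a a' b
  rw [sup_eq_right.2 hle] at h
  exact h ▸ le_sup_left

lemma slatz_mono_right {i : A → B → T} (hi : SlatzBimorphism i) (a : A) {b b' : B}
    (hle : b ≤ b') : i a b ≤ i a b' := by
  have h := hi.2.2.2 a b b'
  rw [sup_eq_right.2 hle] at h
  exact h ▸ le_sup_left

/-- Transfer along a Prop-valued bimorphism: if `i x y ≤ i a b` then `f x y → f a b`. -/
lemma slatz_transfer {i : A → B → T} (h : IsSlatzTensor i)
    {f : A → B → Prop} (hf : SlatzBimorphism f) {x a : A} {y b : B}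
    (hle : i x y ≤ i a b) : f x y → f a b := by
  obtain ⟨hh, ⟨hsup, -, hfac⟩, -⟩ := h.2 Prop inferInstance inferInstance f hf
  have hmono : hh (i x y) ≤ hh (i a b) := by
    have h2 : hh (i a b) = hh (i x y) ⊔ hh (i a b) := by
      rw [← hsup, sup_eq_right.2 hle]
    exact h2 ▸ le_sup_left
  rw [hfac, hfac] at hmono
  exact hmono

/-- The basic Prop-valued characters are bimorphisms. -/
lemma slatz_char_bim (p : A) (q : B) :
    SlatzBimorphism (fun x y => (¬ x ≤ p ∧ ¬ y ≤ q : Prop)) := by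
  refine ⟨fun y => ?_, fun x => ?_, fun x x' y => ?_, fun x y y' => ?_⟩
  · show (¬(⊥:A) ≤ p ∧ ¬y ≤ q) = False
    simp
  · show (¬x ≤ p ∧ ¬(⊥:B) ≤ q) = False
    simp
  · show (¬x ⊔ x' ≤ p ∧ ¬y ≤ q) = ((¬x ≤ p ∧ ¬y ≤ q) ∨ (¬x' ≤ p ∧ ¬y ≤ q))
    rw [eq_iff_iff, sup_le_iff]
    tauto
  · show (¬x ≤ p ∧ ¬y ⊔ y' ≤ q) = ((¬x ≤ p ∧ ¬y ≤ q) ∨ (¬x ≤ p ∧ ¬y' ≤ q))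
    rw [eq_iff_iff, sup_le_iff]
    tauto

/-- Comparison of pure tensors. -/
lemma slatz_pure_le {i : A → B → T} (h : IsSlatzTensor i) {c a : A} {d b : B}
    (hle : i c d ≤ i a b) : c = ⊥ ∨ d = ⊥ ∨ (c ≤ a ∧ d ≤ b) := by
  by_cases hc : c = ⊥
  · exact Or.inl hc
  by_cases hd : d = ⊥
  · exact Or.inr (Or.inl hd)
  refine Or.inr (Or.inr ⟨?_, ?_⟩)
  · by_contra hca
    have := slatz_transfer h (slatz_char_bim a (⊥ : B)) hle
      ⟨hca, fun hdb => hd (le_bot_iff.1 hdb)⟩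
    exact this.1 le_rfl
  · by_contra hdb
    have := slatz_transfer h (slatz_char_bim (⊥ : A) b) hle
      ⟨fun hca => hc (le_bot_iff.1 hca), hdb⟩
    exact this.2 le_rfl

/-- fold a list with sup. -/
def slatzJs : List T → T := fun l => l.foldr (· ⊔ ·) ⊥

lemma slatzJs_le {l : List T} {w : T} (hl : ∀ x ∈ l, x ≤ w) : slatzJs l ≤ w := by
  induction l with
  | nil => exact bot_le
  | cons x l ih =>
      exact sup_le (hl x List.mem_cons_self)
        (ih fun y hy => hl y (List.mem_cons_of_mem x hy))

lemma slatzJs_append (l₁ l₂ : List T) :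
    slatzJs (l₁ ++ l₂) = slatzJs l₁ ⊔ slatzJs l₂ := by
  induction l₁ with
  | nil => simp [slatzJs]
  | cons x l ih =>
      simp only [slatzJs, List.cons_append, List.foldr_cons] at *
      rw [ih, sup_assoc]

/-- Every element of the tensor product is dominated by a finite join of
pure tensors lying below it. -/
lemma slatz_below_join {i : A → B → T} (h : IsSlatzTensor i) (u : T) :
    ∃ l : List (A × B), (∀ p ∈ l, i p.1 p.2 ≤ u) ∧
      u ≤ slatzJs (l.map fun p => i p.1 p.2) := by
  classical
  set P : T → Prop := fun t => ∃ l : List (A × B), (∀ p ∈ l, i p.1 p.2 ≤ u) ∧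
      t ≤ slatzJs (l.map fun p => i p.1 p.2) with hP
  have Pbot : P ⊥ := ⟨[], by simp, bot_le⟩
  have Pdown : ∀ {s t : T}, s ≤ t → P t → P s := by
    rintro s t hst ⟨l, h1, h2⟩; exact ⟨l, h1, hst.trans h2⟩
  have Psup : ∀ s t : T, P s → P t → P (s ⊔ t) := by
    rintro s t ⟨l₁, h1, h2⟩ ⟨l₂, h3, h4⟩
    refine ⟨l₁ ++ l₂, ?_, ?_⟩
    · intro p hp
      rcases List.mem_append.1 hp with hp | hp
      · exact h1 p hp
      · exact h3 p hp
    · rw [List.map_append, slatzJs_append]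
      exact sup_le (h2.trans le_sup_left) (h4.trans le_sup_right)
  have Ptensor : ∀ a b, P (i a b) ↔ i a b ≤ u := by
    intro a b
    constructor
    · rintro ⟨l, h1, h2⟩
      exact h2.trans (slatzJs_le (by
        intro x hx
        rcases List.mem_map.1 hx with ⟨p, hp, rfl⟩
        exact h1 p hp))
    · intro hle
      exact ⟨[(a, b)], by simpa using hle, by simp [slatzJs]⟩
  -- the bimorphism to factor
  have hfbim : SlatzBimorphism (fun a b => (¬ i a b ≤ u : Prop)) := by
    refine ⟨fun b => ?_, fun a => ?_, fun a a' b => ?_, fun a b b' => ?_⟩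
    · show (¬ i ⊥ b ≤ u) = False
      simp [h.1.1]
    · show (¬ i a ⊥ ≤ u) = False
      simp [h.1.2.1]
    · show (¬ i (a ⊔ a') b ≤ u) = ((¬ i a b ≤ u) ∨ (¬ i a' b ≤ u))
      rw [h.1.2.2.1, eq_iff_iff, sup_le_iff]
      tauto
    · show (¬ i a (b ⊔ b') ≤ u) = ((¬ i a b ≤ u) ∨ (¬ i a b' ≤ u))
      rw [h.1.2.2.2, eq_iff_iff, sup_le_iff]
      tauto
  obtain ⟨h0, -, huniq⟩ := h.2 Prop inferInstance inferInstance _ hfbim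
  have hg1 : (fun t => (¬ P t : Prop)) = h0 := by
    refine huniq _ ⟨?_, ?_, ?_⟩
    · intro s t
      show (¬ P (s ⊔ t)) = ((¬ P s) ∨ (¬ P t))
      rw [eq_iff_iff]
      constructor
      · intro hns
        by_contra hcon
        push_neg at hcon
        obtain ⟨hs, ht⟩ := hcon
        exact hns (Psup s t hs ht)
      · rintro (hs | ht) hst
        · exact hs (Pdown le_sup_left hst)
        · exact ht (Pdown le_sup_right hst)
    · show (¬ P ⊥) = False
      simp [Pbot]
    · intro a b
      rw [eq_iff_iff, not_iff_not]
      exact Ptensor a b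
  have hg2 : (fun t => (¬ t ≤ u : Prop)) = h0 := by
    refine huniq _ ⟨?_, ?_, ?_⟩
    · intro s t
      show (¬ s ⊔ t ≤ u) = ((¬ s ≤ u) ∨ (¬ t ≤ u))
      rw [eq_iff_iff, sup_le_iff]
      tauto
    · show (¬ (⊥:T) ≤ u) = False
      simp
    · intro a b; rfl
  have hPu : P u := by
    have := congrFun (hg1.trans hg2.symm) u
    rw [eq_iff_iff, not_iff_not] at this
    exact this.2 le_rfl
  exact hPu

end Aux

/-- In the tensor product of distributive lattices with zero (in the category of
semilattices with zero), pure tensors multiply componentwise under `⊓`. -/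
theorem stmt14 {A B T : Type*} [DistribLattice A] [OrderBot A]
    [DistribLattice B] [OrderBot B] [DistribLattice T] [OrderBot T]
    (i : A → B → T) (h : IsSlatzTensor i) (a₁ a₂ : A) (b₁ b₂ : B) :
    i a₁ b₁ ⊓ i a₂ b₂ = i (a₁ ⊓ a₂) (b₁ ⊓ b₂) := by
  have hi := h.1
  refine le_antisymm ?_ ?_
  · -- hard direction
    obtain ⟨l, hl1, hl2⟩ := slatz_below_join h (i a₁ b₁ ⊓ i a₂ b₂)
    refine hl2.trans (slatzJs_le ?_)
    intro x hx
    rcases List.mem_map.1 hx with ⟨p, hp, rfl⟩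
    have h1 : i p.1 p.2 ≤ i a₁ b₁ := (hl1 p hp).trans inf_le_left
    have h2 : i p.1 p.2 ≤ i a₂ b₂ := (hl1 p hp).trans inf_le_right
    rcases slatz_pure_le h h1 with hc | hd | ⟨hca, hdb⟩
    · rw [hc, hi.1]; exact bot_le
    · rw [hd, hi.2.1]; exact bot_le
    rcases slatz_pure_le h h2 with hc | hd | ⟨hca', hdb'⟩
    · rw [hc, hi.1]; exact bot_le
    · rw [hd, hi.2.1]; exact bot_le
    exact le_trans (slatz_mono_left hi _ (le_inf hca hca'))
      (slatz_mono_right hi _ (le_inf hdb hdb'))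
  · exact le_inf
      (le_trans (slatz_mono_left hi _ inf_le_left) (slatz_mono_right hi _ inf_le_left))
      (le_trans (slatz_mono_left hi _ inf_le_right) (slatz_mono_right hi _ inf_le_right))
end

section
/- The tensor product (in the category of semilattices with zero) of two Boolean algebras is a Boolean algebra. -/
namespace Stmt16Aux

open scoped Classical

variable {A B T : Type*} [BooleanAlgebra A] [BooleanAlgebra B]
  [SemilatticeSup T] [OrderBot T]

/-- Join of a list of pure tensors. -/
def sL (i : A → B → T) : List (A × B) → T
  | [] => ⊥
  | p :: L => i p.1 p.2 ⊔ sL i L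

/-- Boolean evaluation of a list of pairs. -/
def eL (g : A → B → Bool) : List (A × B) → Bool
  | [] => false
  | p :: L => g p.1 p.2 || eL g L

/-- Pairwise meets of two lists. -/
def pm (L M : List (A × B)) : List (A × B) :=
  L.flatMap fun p => M.map fun q => (p.1 ⊓ q.1, p.2 ⊓ q.2)

/-- Formal complement of a list of pairs. -/
def cl : List (A × B) → List (A × B)
  | [] => [((⊤ : A), (⊤ : B))]
  | p :: L => pm [(p.1ᶜ, (⊤ : B)), ((⊤ : A), p.2ᶜ)] (cl L)

section Lists

variable {i : A → B → T}

lemma sL_append (i : A → B → T) (L M : List (A × B)) :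
    sL i (L ++ M) = sL i L ⊔ sL i M := by
  induction L with
  | nil => simp [sL]
  | cons p L ih => simp [sL, ih, sup_assoc]

lemma sL_single (i : A → B → T) (p : A × B) : sL i [p] = i p.1 p.2 := by
  simp [sL]

lemma sL_le_iff {t : T} {L : List (A × B)} :
    sL i L ≤ t ↔ ∀ p ∈ L, i p.1 p.2 ≤ t := by
  induction L with
  | nil => simp [sL]
  | cons p L ih => simp [sL, sup_le_iff, ih]

lemma le_sL {L : List (A × B)} {p : A × B} (hp : p ∈ L) : i p.1 p.2 ≤ sL i L := by
  induction L with
  | nil => cases hp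
  | cons q L ih =>
    rcases List.mem_cons.1 hp with h | h
    · subst h; exact le_sup_left
    · exact (ih h).trans le_sup_right

lemma eL_eq_true {g : A → B → Bool} {L : List (A × B)} :
    eL g L = true ↔ ∃ p ∈ L, g p.1 p.2 = true := by
  induction L with
  | nil => simp [eL]
  | cons p L ih => simp [eL, ih]

lemma mem_pm {L M : List (A × B)} {p q : A × B} (hp : p ∈ L) (hq : q ∈ M) :
    (p.1 ⊓ q.1, p.2 ⊓ q.2) ∈ pm L M := by
  simp only [pm, List.mem_flatMap, List.mem_map]
  exact ⟨p, hp, q, hq, rfl⟩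

lemma pm_elim {L M : List (A × B)} {r : A × B} (hr : r ∈ pm L M) :
    ∃ p ∈ L, ∃ q ∈ M, r = (p.1 ⊓ q.1, p.2 ⊓ q.2) := by
  simp only [pm, List.mem_flatMap, List.mem_map] at hr
  obtain ⟨p, hp, q, hq, h⟩ := hr
  exact ⟨p, hp, q, hq, h.symm⟩

lemma any_or {α : Type*} (L : List α) (f g : α → Bool) :
    (L.any fun x => f x || g x) = (L.any f || L.any g) := by
  induction L with
  | nil => rfl
  | cons x L ih =>
    simp only [List.any_cons, ih]
    cases f x <;> cases g x <;> simp

end Lists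

section Bim

variable {i : A → B → T}

lemma bim_mono {X : Type*} [SemilatticeSup X] [OrderBot X] {g : A → B → X}
    (hg : SlatzBimorphism g) {a a' : A} {b b' : B} (ha : a ≤ a') (hbb : b ≤ b') :
    g a b ≤ g a' b' := by
  have h1 : g a b ≤ g a' b := by
    have e := hg.2.2.1 a a' b
    rw [sup_eq_right.2 ha] at e
    have : g a b ≤ g a b ⊔ g a' b := le_sup_left
    rwa [← e] at this
  have h2 : g a' b ≤ g a' b' := by
    have e := hg.2.2.2 a' b b'
    rw [sup_eq_right.2 hbb] at e
    have : g a' b ≤ g a' b ⊔ g a' b' := le_sup_left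
    rwa [← e] at this
  exact h1.trans h2

lemma bool_true_mono {g : A → B → Bool} (hg : SlatzBimorphism g) {a a' : A} {b b' : B}
    (ha : a ≤ a') (hbb : b ≤ b') (hv : g a b = true) : g a' b' = true :=
  Bool.le_iff_imp.1 (bim_mono hg ha hbb) hv

/-- The principal character `x ↦ ¬ (x ≤ t)` restricted to pure tensors is a bimorphism. -/
lemma chi_bim (hb : SlatzBimorphism i) (t : T) :
    SlatzBimorphism (fun a b => if i a b ≤ t then false else true : A → B → Bool) := by
  classical
  refine ⟨?_, ?_, ?_, ?_⟩
  · intro b; simp [hb.1 b]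
  · intro a; simp [hb.2.1 a]
  · intro a a' b
    show (if i (a ⊔ a') b ≤ t then false else true)
        = ((if i a b ≤ t then false else true) ⊔ (if i a' b ≤ t then false else true) : Bool)
    rw [hb.2.2.1]
    by_cases h1 : i a b ≤ t <;> by_cases h2 : i a' b ≤ t <;>
      simp [h1, h2, sup_le_iff]
  · intro a b b'
    show (if i a (b ⊔ b') ≤ t then false else true)
        = ((if i a b ≤ t then false else true) ⊔ (if i a b' ≤ t then false else true) : Bool)
    rw [hb.2.2.2]
    by_cases h1 : i a b ≤ t <;> by_cases h2 : i a b' ≤ t <;>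
      simp [h1, h2, sup_le_iff]

/-- Evaluation of a sup-bot morphism factoring `g` on a formal join. -/
lemma chi_sL {χ : T → Bool} (hs : ∀ s t : T, χ (s ⊔ t) = χ s ⊔ χ t) (h0 : χ ⊥ = ⊥)
    {g : A → B → Bool} (hf : ∀ a b, χ (i a b) = g a b) (L : List (A × B)) :
    χ (sL i L) = eL g L := by
  induction L with
  | nil => simpa [sL, eL] using h0
  | cons p L ih =>
    rw [sL, hs, hf, ih, eL]
    simp

/-- Key order-transfer lemma: joins compare whenever all Bool bimorphisms say so.
    (Does not use the universal property.) -/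
lemma key_le (hb : SlatzBimorphism i) {L M : List (A × B)}
    (H : ∀ g : A → B → Bool, SlatzBimorphism g → eL g L = true → eL g M = true) :
    sL i L ≤ sL i M := by
  classical
  set t := sL i M with ht
  have hχs : ∀ x y : T, (if x ⊔ y ≤ t then false else true)
      = ((if x ≤ t then false else true) ⊔ (if y ≤ t then false else true) : Bool) := by
    intro x y
    by_cases h1 : x ≤ t <;> by_cases h2 : y ≤ t <;> simp [h1, h2, sup_le_iff]
  have hχ0 : (if (⊥ : T) ≤ t then false else true) = (⊥ : Bool) := by simp
  have hfac : ∀ a b, (if i a b ≤ t then false else true)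
      = (fun a b => if i a b ≤ t then false else true : A → B → Bool) a b := fun _ _ => rfl
  have hgM : eL (fun a b => if i a b ≤ t then false else true) M = false := by
    cases hM : eL (fun a b => if i a b ≤ t then false else true) M
    · rfl
    · exfalso
      obtain ⟨p, hp, hpt⟩ := eL_eq_true.1 hM
      have hle : i p.1 p.2 ≤ t := le_sL hp
      simp [hle] at hpt
  have hgL : eL (fun a b => if i a b ≤ t then false else true) L = false := by
    cases hL : eL (fun a b => if i a b ≤ t then false else true) L
    · rfl
    · have := H _ (chi_bim hb t) hL
      rw [hgM] at this
      cases this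
  have hv : (if sL i L ≤ t then false else true) = false := by
    have := chi_sL (i := i) (χ := fun x => if x ≤ t then false else true) hχs hχ0 hfac L
    rw [this, hgL]
  by_contra hc
  simp [hc] at hv

/-- Monotone transfer: if `sL i L ≤ sL i M` then any Bool bimorphism true on `L`
    is true on `M`. (Uses the existence part of the universal property.) -/
lemma gval_mono (h : IsSlatzTensor i) {g : A → B → Bool} (hg : SlatzBimorphism g)
    {L M : List (A × B)} (hLM : sL i L ≤ sL i M) (hL : eL g L = true) :
    eL g M = true := by
  obtain ⟨χ, ⟨hs, h0, hf⟩, -⟩ := h.2 Bool inferInstance inferInstance g hg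
  have e1 : χ (sL i L) = eL g L := chi_sL hs h0 hf L
  have e2 : χ (sL i M) = eL g M := chi_sL hs h0 hf M
  have e3 : χ (sL i M) = χ (sL i L) ⊔ χ (sL i M) := by
    rw [← hs, sup_eq_right.2 hLM]
  rw [e1, e2, hL] at e3
  simpa using e3

/-- Representation: every element of the tensor product is a finite join of
    pure tensors. (Uses the uniqueness part of the universal property.) -/
lemma rep (h : IsSlatzTensor i) (t : T) : ∃ L : List (A × B), sL i L = t := by
  classical
  have hb := h.1
  have hg : SlatzBimorphism (fun a b => if i a b ≤ t then false else true : A → B → Bool) :=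
    chi_bim hb t
  obtain ⟨χ, -, huniq⟩ := h.2 Bool inferInstance inferInstance _ hg
  set P : T → Prop := fun x => ∃ L, x ≤ sL i L ∧ sL i L ≤ t with hP
  have hPbot : P ⊥ := ⟨[], le_rfl, bot_le⟩
  have hPsup : ∀ x y : T, P (x ⊔ y) ↔ P x ∧ P y := by
    intro x y
    constructor
    · rintro ⟨L, h1, h2⟩
      exact ⟨⟨L, le_sup_left.trans h1, h2⟩, ⟨L, le_sup_right.trans h1, h2⟩⟩
    · rintro ⟨⟨L, h1, h2⟩, ⟨M, h3, h4⟩⟩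
      exact ⟨L ++ M, by rw [sL_append]; exact sup_le_sup h1 h3,
        by rw [sL_append]; exact sup_le h2 h4⟩
  have hPten : ∀ a b, P (i a b) ↔ i a b ≤ t := by
    intro a b
    constructor
    · rintro ⟨L, h1, h2⟩; exact h1.trans h2
    · intro hle
      exact ⟨[(a, b)], by rw [sL_single], by rw [sL_single]; exact hle⟩
  have e1 : (fun x : T => if x ≤ t then false else true) = χ := by
    apply huniq
    refine ⟨?_, ?_, ?_⟩
    · intro x y
      by_cases h1 : x ≤ t <;> by_cases h2 : y ≤ t <;> simp [h1, h2, sup_le_iff]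
    · simp
    · intro a b; rfl
  have e2 : (fun x : T => if P x then false else true) = χ := by
    apply huniq
    refine ⟨?_, ?_, ?_⟩
    · intro x y
      by_cases h1 : P x <;> by_cases h2 : P y <;> simp [hPsup, h1, h2]
    · simp [hPbot]
    · intro a b
      by_cases hx : i a b ≤ t
      · simp [hx, (hPten a b).2 hx]
      · have hnp : ¬ P (i a b) := fun hp => hx ((hPten a b).1 hp)
        simp [hx, hnp]
  have e3 : (if P t then false else true) = (if t ≤ t then false else true) := by
    rw [show (if P t then false else true) = χ t from congrFun e2 t,
        show (if t ≤ t then false else true) = χ t from congrFun e1 t]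
  rw [if_pos le_rfl] at e3
  by_cases hPt : P t
  · obtain ⟨L, h1, h2⟩ := hPt
    exact ⟨L, le_antisymm h2 h1⟩
  · rw [if_neg hPt] at e3; cases e3

end Bim

section Meet

variable {i : A → B → T}

lemma bim_meet {g : A → B → Bool} (hg : SlatzBimorphism g) (c : A) (d : B) :
    SlatzBimorphism (fun a b => g (a ⊓ c) (b ⊓ d)) := by
  refine ⟨?_, ?_, ?_, ?_⟩
  · intro b
    show g (⊥ ⊓ c) (b ⊓ d) = ⊥
    rw [bot_inf_eq]; exact hg.1 _
  · intro a
    show g (a ⊓ c) (⊥ ⊓ d) = ⊥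
    rw [bot_inf_eq]; exact hg.2.1 _
  · intro a a' b
    show g ((a ⊔ a') ⊓ c) (b ⊓ d) = g (a ⊓ c) (b ⊓ d) ⊔ g (a' ⊓ c) (b ⊓ d)
    rw [inf_sup_right]; exact hg.2.2.1 _ _ _
  · intro a b b'
    show g (a ⊓ c) ((b ⊔ b') ⊓ d) = g (a ⊓ c) (b ⊓ d) ⊔ g (a ⊓ c) (b' ⊓ d)
    rw [inf_sup_right]; exact hg.2.2.2 _ _ _

lemma bim_any {g : A → B → Bool} (hg : SlatzBimorphism g) (M : List (A × B)) :
    SlatzBimorphism (fun a b => M.any fun q => g (a ⊓ q.1) (b ⊓ q.2)) := by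
  have hfalse : ∀ (f : A × B → Bool), (∀ q, f q = false) → M.any f = false := by
    intro f hf
    induction M with
    | nil => rfl
    | cons q M ih => simp [List.any_cons, hf, ih]
  refine ⟨?_, ?_, ?_, ?_⟩
  · intro b
    show (M.any fun q => g (⊥ ⊓ q.1) (b ⊓ q.2)) = ⊥
    exact hfalse _ fun q => by rw [bot_inf_eq]; simpa using hg.1 (b ⊓ q.2)
  · intro a
    show (M.any fun q => g (a ⊓ q.1) (⊥ ⊓ q.2)) = ⊥
    exact hfalse _ fun q => by rw [bot_inf_eq]; simpa using hg.2.1 (a ⊓ q.1)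
  · intro a a' b
    show (M.any fun q => g ((a ⊔ a') ⊓ q.1) (b ⊓ q.2))
        = ((M.any fun q => g (a ⊓ q.1) (b ⊓ q.2)) ⊔ (M.any fun q => g (a' ⊓ q.1) (b ⊓ q.2)) : Bool)
    have e : ∀ q : A × B, g ((a ⊔ a') ⊓ q.1) (b ⊓ q.2)
        = (g (a ⊓ q.1) (b ⊓ q.2) || g (a' ⊓ q.1) (b ⊓ q.2)) := by
      intro q
      rw [inf_sup_right]
      simpa using hg.2.2.1 (a ⊓ q.1) (a' ⊓ q.1) (b ⊓ q.2)
    calc (M.any fun q => g ((a ⊔ a') ⊓ q.1) (b ⊓ q.2))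
        = (M.any fun q => g (a ⊓ q.1) (b ⊓ q.2) || g (a' ⊓ q.1) (b ⊓ q.2)) := by
          simp only [e]
      _ = _ := by rw [any_or]; simp
  · intro a b b'
    show (M.any fun q => g (a ⊓ q.1) ((b ⊔ b') ⊓ q.2))
        = ((M.any fun q => g (a ⊓ q.1) (b ⊓ q.2)) ⊔ (M.any fun q => g (a ⊓ q.1) (b' ⊓ q.2)) : Bool)
    have e : ∀ q : A × B, g (a ⊓ q.1) ((b ⊔ b') ⊓ q.2)
        = (g (a ⊓ q.1) (b ⊓ q.2) || g (a ⊓ q.1) (b' ⊓ q.2)) := by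
      intro q
      rw [inf_sup_right]
      simpa using hg.2.2.2 (a ⊓ q.1) (b ⊓ q.2) (b' ⊓ q.2)
    calc (M.any fun q => g (a ⊓ q.1) ((b ⊔ b') ⊓ q.2))
        = (M.any fun q => g (a ⊓ q.1) (b ⊓ q.2) || g (a ⊓ q.1) (b' ⊓ q.2)) := by
          simp only [e]
      _ = _ := by rw [any_or]; simp

lemma pm_le_left (hb : SlatzBimorphism i) {L M : List (A × B)} :
    sL i (pm L M) ≤ sL i L := by
  rw [sL_le_iff]
  intro r hr
  obtain ⟨p, hp, q, hq, rfl⟩ := pm_elim hr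
  exact (bim_mono hb inf_le_left inf_le_left).trans (le_sL hp)

lemma pm_le_right (hb : SlatzBimorphism i) {L M : List (A × B)} :
    sL i (pm L M) ≤ sL i M := by
  rw [sL_le_iff]
  intro r hr
  obtain ⟨p, hp, q, hq, rfl⟩ := pm_elim hr
  exact (bim_mono hb inf_le_right inf_le_right).trans (le_sL hq)

lemma le_pm (h : IsSlatzTensor i) {L M : List (A × B)} {w : T}
    (h1 : w ≤ sL i L) (h2 : w ≤ sL i M) : w ≤ sL i (pm L M) := by
  obtain ⟨N, rfl⟩ := rep h w
  rw [sL_le_iff]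
  intro r hr
  have hrL : i r.1 r.2 ≤ sL i L := (le_sL hr).trans h1
  have hrM : i r.1 r.2 ≤ sL i M := (le_sL hr).trans h2
  rw [← sL_single i r]
  apply key_le h.1
  intro g hg hgr
  have hgr' : g r.1 r.2 = true := by simpa [eL] using hgr
  have hg2 : SlatzBimorphism (fun a b => g (a ⊓ r.1) (b ⊓ r.2)) := bim_meet hg r.1 r.2
  have step1 : eL (fun a b => g (a ⊓ r.1) (b ⊓ r.2)) M = true := by
    apply gval_mono h hg2 (L := [r])
    · rw [sL_single]; exact hrM
    · simpa [eL] using hgr'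
  obtain ⟨q0, hq0, hq0v⟩ := eL_eq_true.1 step1
  have hg3 : SlatzBimorphism (fun a b => M.any fun q => g (a ⊓ q.1) (b ⊓ q.2)) := bim_any hg M
  have step2 : eL (fun a b => M.any fun q => g (a ⊓ q.1) (b ⊓ q.2)) L = true := by
    apply gval_mono h hg3 (L := [r])
    · rw [sL_single]; exact hrL
    · have : (M.any fun q => g (r.1 ⊓ q.1) (r.2 ⊓ q.2)) = true := by
        rw [List.any_eq_true]
        exact ⟨q0, hq0, by rw [inf_comm r.1 q0.1, inf_comm r.2 q0.2]; exact hq0v⟩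
      simpa [eL] using this
  obtain ⟨p, hp, hpv⟩ := eL_eq_true.1 step2
  obtain ⟨q1, hq1, hv⟩ := List.any_eq_true.1 hpv
  rw [eL_eq_true]
  exact ⟨(p.1 ⊓ q1.1, p.2 ⊓ q1.2), mem_pm hp hq1, hv⟩

end Meet

section Compl

variable {i : A → B → T}

lemma cl_inv : ∀ (L : List (A × B)) (u : A × B), u ∈ cl L →
    ∀ p ∈ L, u.1 ≤ p.1ᶜ ∨ u.2 ≤ p.2ᶜ := by
  intro L
  induction L with
  | nil => intro u _ p hp; cases hp
  | cons r L ih =>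
    intro u hu p hp
    obtain ⟨w, hw, v, hv, rfl⟩ := pm_elim hu
    rcases List.mem_cons.1 hp with hpr | hpL
    · subst hpr
      rcases List.mem_cons.1 hw with hw1 | hw2
      · left; subst hw1; exact inf_le_left
      · right
        have : w = (⊤, p.2ᶜ) := by simpa using hw2
        subst this; exact inf_le_left
    · rcases ih v hv p hpL with hc | hc
      · left; exact inf_le_right.trans hc
      · right; exact inf_le_right.trans hc

lemma compl_bot (hb : SlatzBimorphism i) (L : List (A × B)) :
    sL i (pm L (cl L)) = ⊥ := by
  refine le_antisymm ?_ bot_le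
  rw [sL_le_iff]
  intro r hr
  obtain ⟨p, hp, u, hu, rfl⟩ := pm_elim hr
  rcases cl_inv L u hu p hp with hc | hc
  · have e : p.1 ⊓ u.1 = ⊥ := by
      have : p.1 ⊓ u.1 ≤ p.1 ⊓ p.1ᶜ := inf_le_inf le_rfl hc
      rw [inf_compl_eq_bot] at this
      exact le_bot_iff.1 this
    rw [show ((p.1 ⊓ u.1, p.2 ⊓ u.2) : A × B).1 = p.1 ⊓ u.1 from rfl, e, hb.1]
  · have e : p.2 ⊓ u.2 = ⊥ := by
      have : p.2 ⊓ u.2 ≤ p.2 ⊓ p.2ᶜ := inf_le_inf le_rfl hc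
      rw [inf_compl_eq_bot] at this
      exact le_bot_iff.1 this
    rw [show ((p.1 ⊓ u.1, p.2 ⊓ u.2) : A × B).2 = p.2 ⊓ u.2 from rfl, e, hb.2.1]

lemma compl_top (hb : SlatzBimorphism i) (L : List (A × B)) :
    i ⊤ ⊤ ≤ sL i (L ++ cl L) := by
  have key : ∀ g : A → B → Bool, SlatzBimorphism g → g ⊤ ⊤ = true →
      eL g (L ++ cl L) = true := by
    intro g hg
    induction L with
    | nil =>
      intro hgt
      rw [eL_eq_true]
      exact ⟨((⊤ : A), (⊤ : B)), by simp [cl], hgt⟩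
    | cons r L ih =>
      intro hgt
      obtain ⟨u, hu, huv⟩ := eL_eq_true.1 (ih hgt)
      rw [eL_eq_true]
      rcases List.mem_append.1 hu with huL | hucl
      · exact ⟨u, List.mem_append.2 (Or.inl (List.mem_cons.2 (Or.inr huL))), huv⟩
      · -- u ∈ cl L with g u.1 u.2 = true; split along r
        have e1 : u.1 = (r.1 ⊓ u.1) ⊔ (r.1ᶜ ⊓ u.1) := by
          rw [← inf_sup_right, sup_compl_eq_top, top_inf_eq]
        have e2 : u.2 = (r.2 ⊓ u.2) ⊔ (r.2ᶜ ⊓ u.2) := by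
          rw [← inf_sup_right, sup_compl_eq_top, top_inf_eq]
        have expand : g u.1 u.2
            = ((g (r.1 ⊓ u.1) (r.2 ⊓ u.2) || g (r.1 ⊓ u.1) (r.2ᶜ ⊓ u.2))
              || (g (r.1ᶜ ⊓ u.1) (r.2 ⊓ u.2) || g (r.1ᶜ ⊓ u.1) (r.2ᶜ ⊓ u.2))) := by
          conv_lhs => rw [e1, e2]
          rw [hg.2.2.1, hg.2.2.2, hg.2.2.2]
          simp [sup_assoc]
        rw [expand] at huv
        have mem1 : ((r.1ᶜ ⊓ u.1, ⊤ ⊓ u.2) : A × B) ∈ cl (r :: L) :=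
          mem_pm (p := (r.1ᶜ, (⊤ : B))) (L := [(r.1ᶜ, (⊤ : B)), ((⊤ : A), r.2ᶜ)])
            (by simp) hucl
        have mem2 : ((⊤ ⊓ u.1, r.2ᶜ ⊓ u.2) : A × B) ∈ cl (r :: L) :=
          mem_pm (p := ((⊤ : A), r.2ᶜ)) (L := [(r.1ᶜ, (⊤ : B)), ((⊤ : A), r.2ᶜ)])
            (by simp) hucl
        rcases Bool.or_eq_true_iff.1 huv with h12 | h34
        · rcases Bool.or_eq_true_iff.1 h12 with hc1 | hc2
          · -- below (r.1, r.2): head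
            refine ⟨r, List.mem_append.2 (Or.inl (List.mem_cons.2 (Or.inl rfl))), ?_⟩
            exact bool_true_mono hg inf_le_left inf_le_left hc1
          · refine ⟨(⊤ ⊓ u.1, r.2ᶜ ⊓ u.2), List.mem_append.2 (Or.inr mem2), ?_⟩
            exact bool_true_mono hg (by simp [inf_le_right]) le_rfl hc2
        · rcases Bool.or_eq_true_iff.1 h34 with hc3 | hc4
          · refine ⟨(r.1ᶜ ⊓ u.1, ⊤ ⊓ u.2), List.mem_append.2 (Or.inr mem1), ?_⟩
            exact bool_true_mono hg le_rfl (by simp [inf_le_right]) hc3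
          · refine ⟨(r.1ᶜ ⊓ u.1, ⊤ ⊓ u.2), List.mem_append.2 (Or.inr mem1), ?_⟩
            exact bool_true_mono hg le_rfl (by simp [inf_le_right]) hc4
  have := key_le hb (L := [((⊤ : A), (⊤ : B))]) (M := L ++ cl L)
    (fun g hg hgt => key g hg (by simpa [eL] using hgt))
  rw [sL_single] at this
  exact this

end Compl

end Stmt16Aux

/-- The tensor product (in the category of semilattices with zero) of two Boolean
algebras carries a Boolean algebra structure extending its join and zero. -/
theorem stmt16 {A B T : Type*} [BooleanAlgebra A] [BooleanAlgebra B]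
    [SemilatticeSup T] [OrderBot T] (i : A → B → T) (h : IsSlatzTensor i) :
    ∃ ba : BooleanAlgebra T,
      (∀ x y : T, ba.toDistribLattice.toLattice.toSemilatticeSup.sup x y = x ⊔ y) ∧
      ba.toBot.bot = (⊥ : T) := by
  classical
  have hb := h.1
  choose rp hrp using fun t : T => Stmt16Aux.rep h t
  set m : T → T → T := fun x y => Stmt16Aux.sL i (Stmt16Aux.pm (rp x) (rp y)) with hm
  set c : T → T := fun x => Stmt16Aux.sL i (Stmt16Aux.cl (rp x)) with hc
  have m_le_left : ∀ x y, m x y ≤ x := fun x y =>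
    le_of_le_of_eq (Stmt16Aux.pm_le_left hb) (hrp x)
  have m_le_right : ∀ x y, m x y ≤ y := fun x y =>
    le_of_le_of_eq (Stmt16Aux.pm_le_right hb) (hrp y)
  have le_m : ∀ {x y w : T}, w ≤ x → w ≤ y → w ≤ m x y := fun {x y w} hx hy =>
    Stmt16Aux.le_pm h (le_of_le_of_eq hx (hrp x).symm) (le_of_le_of_eq hy (hrp y).symm)
  have hc_inf : ∀ x, m x (c x) ≤ ⊥ := by
    intro x
    have h1 : m x (c x) ≤ Stmt16Aux.sL i (rp x) :=
      le_of_le_of_eq (m_le_left x (c x)) (hrp x).symm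
    have h2 : m x (c x) ≤ Stmt16Aux.sL i (Stmt16Aux.cl (rp x)) := m_le_right x (c x)
    have := Stmt16Aux.le_pm h h1 h2
    rwa [Stmt16Aux.compl_bot hb (rp x)] at this
  have hc_sup : ∀ x : T, i ⊤ ⊤ ≤ x ⊔ c x := by
    intro x
    have := Stmt16Aux.compl_top hb (rp x)
    rwa [Stmt16Aux.sL_append, hrp x] at this
  have h_top : ∀ x : T, x ≤ i ⊤ ⊤ := by
    intro x
    conv_lhs => rw [← hrp x]
    rw [Stmt16Aux.sL_le_iff]
    intro p _
    exact Stmt16Aux.bim_mono hb le_top le_top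
  have h_distrib : ∀ x y z : T, m x (y ⊔ z) ≤ m x y ⊔ m x z := by
    intro x y z
    have e1 : y ⊔ z = Stmt16Aux.sL i (rp y ++ rp z) := by
      rw [Stmt16Aux.sL_append, hrp, hrp]
    have step : m x (y ⊔ z) ≤ Stmt16Aux.sL i (Stmt16Aux.pm (rp x) (rp y ++ rp z)) :=
      Stmt16Aux.le_pm h
        (le_of_le_of_eq (m_le_left x (y ⊔ z)) (hrp x).symm)
        (le_of_le_of_eq (m_le_right x (y ⊔ z)) e1)
    refine step.trans ?_
    rw [Stmt16Aux.sL_le_iff]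
    intro r hr
    obtain ⟨p, hp, q, hq, rfl⟩ := Stmt16Aux.pm_elim hr
    rcases List.mem_append.1 hq with hq | hq
    · exact (Stmt16Aux.le_sL (Stmt16Aux.mem_pm hp hq)).trans le_sup_left
    · exact (Stmt16Aux.le_sL (Stmt16Aux.mem_pm hp hq)).trans le_sup_right
  letI instL : Lattice T :=
    { (inferInstance : SemilatticeSup T) with
      inf := m
      inf_le_left := m_le_left
      inf_le_right := m_le_right
      le_inf := fun _ _ _ h1 h2 => le_m h1 h2 }
  letI instD : DistribLattice T := DistribLattice.ofInfSupLe h_distrib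
  refine ⟨{ instD with
      compl := c
      top := i ⊤ ⊤
      bot := ⊥
      inf_compl_le_bot := hc_inf
      top_le_sup_compl := hc_sup
      le_top := h_top
      bot_le := fun x => bot_le
      sdiff := fun x y => m x (c y)
      himp := fun x y => y ⊔ c x
      sdiff_eq := fun _ _ => rfl
      himp_eq := fun _ _ => rfl }, fun x y => rfl, rfl⟩
end

section
/- Let f : B_ℝ × B_ℝ → X be a bimorphism of join-semilattices with zero, where B_ℝ is the Boolean algebra of cubical areas of ℝ. If a cubical area of ℝ² admits two finite covers by rectangles (products of intervals), X = ⋃_{i∈I} aᵢ × bᵢ = ⋃_{j∈J} a'ⱼ × b'ⱼ, then ⋁_{i∈I} f(aᵢ, bᵢ) = ⋁_{j∈J} f(a'ⱼ, b'ⱼ). -/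
open Set

/-- Membership in `B_ℝ`: a finite union of intervals (order-convex subsets) of `ℝ`. -/
def FinUnionIntervals (X : Set ℝ) : Prop :=
  ∃ 𝒮 : Finset (Set ℝ), (∀ I ∈ 𝒮, I.OrdConnected) ∧ ⋃₀ ↑𝒮 = X

open Classical in
lemma fui_of_oc {s : Set ℝ} (h : s.OrdConnected) : FinUnionIntervals s :=
  ⟨{s}, fun I hI => by simp only [Finset.mem_singleton] at hI; subst hI; exact h, by simp⟩

open Classical in
lemma fui_biUnion {α : Type*} (S : Finset α) (g : α → Set ℝ)
    (h : ∀ s ∈ S, (g s).OrdConnected) : FinUnionIntervals (⋃ s ∈ S, g s) := by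
  refine ⟨S.image g, fun I hI => ?_, ?_⟩
  · obtain ⟨s, hs, rfl⟩ := Finset.mem_image.1 hI
    exact h s hs
  · rw [Finset.coe_image, Set.sUnion_image]
    simp

lemma oc_iInter {ι : Sort*} {s : ι → Set ℝ} (h : ∀ i, (s i).OrdConnected) :
    (⋂ i, s i).OrdConnected :=
  ⟨fun _ hx _ hy _ hz => Set.mem_iInter.2 fun i =>
    (h i).out' (Set.mem_iInter.1 hx i) (Set.mem_iInter.1 hy i) hz⟩

/-- The three order-pieces of an interval: itself, strictly left of it, strictly right of it. -/
def piece : Fin 3 → Set ℝ → Set ℝ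
  | 0, s => s
  | 1, s => {x | ∀ y ∈ s, x < y}
  | 2, s => {x | ∀ y ∈ s, y < x}

lemma piece_oc (k : Fin 3) {s : Set ℝ} (hs : s.OrdConnected) : (piece k s).OrdConnected := by
  fin_cases k
  · exact hs
  · exact ⟨fun x hx y hy z hz w hw => lt_of_le_of_lt hz.2 (hy w hw)⟩
  · exact ⟨fun x hx y hy z hz w hw => lt_of_lt_of_le (hx w hw) hz.1⟩

lemma piece_cover {s : Set ℝ} (hs : s.OrdConnected) (x : ℝ) : ∃ k, x ∈ piece k s := by
  by_cases h0 : x ∈ s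
  · exact ⟨0, h0⟩
  by_cases h1 : ∀ y ∈ s, x < y
  · exact ⟨1, h1⟩
  refine ⟨2, fun y hy => ?_⟩
  push_neg at h1
  obtain ⟨y₁, hy₁, hle⟩ := h1
  by_contra hxy
  push_neg at hxy
  exact h0 (hs.out' hy₁ hy ⟨hle, hxy⟩)

lemma piece_eq_zero {s : Set ℝ} {x : ℝ} {k : Fin 3} (hx : x ∈ piece k s) (hxs : x ∈ s) :
    k = 0 := by
  fin_cases k
  · rfl
  · exact absurd (hx x hxs) (lt_irrefl x)
  · exact absurd (hx x hxs) (lt_irrefl x)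

section Bimorphism

variable {X : Type*} [SemilatticeSup X] [OrderBot X] (f : Set ℝ → Set ℝ → X)

lemma f_sup_left
    (hbot1 : ∀ b, FinUnionIntervals b → f ∅ b = ⊥)
    (hsup1 : ∀ a a' b, FinUnionIntervals a → FinUnionIntervals a' →
      FinUnionIntervals b → f (a ∪ a') b = f a b ⊔ f a' b)
    {α : Type*} (S : Finset α) (g : α → Set ℝ)
    (hg : ∀ s ∈ S, (g s).OrdConnected) {b : Set ℝ} (hb : b.OrdConnected) :
    f (⋃ s ∈ S, g s) b = S.sup fun s => f (g s) b := by
  classical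
  induction S using Finset.induction_on with
  | empty => simpa using hbot1 b (fui_of_oc hb)
  | @insert a S ha ih =>
    rw [Finset.set_biUnion_insert,
      hsup1 _ _ _ (fui_of_oc (hg a (Finset.mem_insert_self a S)))
        (fui_biUnion S g fun s hs => hg s (Finset.mem_insert_of_mem hs)) (fui_of_oc hb),
      Finset.sup_insert, ih fun s hs => hg s (Finset.mem_insert_of_mem hs)]

lemma f_sup_right
    (hbot2 : ∀ a, FinUnionIntervals a → f a ∅ = ⊥)
    (hsup2 : ∀ a b b', FinUnionIntervals a → FinUnionIntervals b →
      FinUnionIntervals b' → f a (b ∪ b') = f a b ⊔ f a b')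
    {α : Type*} (S : Finset α) (g : α → Set ℝ)
    (hg : ∀ s ∈ S, (g s).OrdConnected) {a : Set ℝ} (ha : a.OrdConnected) :
    f a (⋃ s ∈ S, g s) = S.sup fun s => f a (g s) := by
  classical
  induction S using Finset.induction_on with
  | empty => simpa using hbot2 a (fui_of_oc ha)
  | @insert c S hc ih =>
    rw [Finset.set_biUnion_insert,
      hsup2 _ _ _ (fui_of_oc ha) (fui_of_oc (hg c (Finset.mem_insert_self c S)))
        (fui_biUnion S g fun s hs => hg s (Finset.mem_insert_of_mem hs)),
      Finset.sup_insert, ih fun s hs => hg s (Finset.mem_insert_of_mem hs)]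

lemma f_mono_left
    (hsup1 : ∀ a a' b, FinUnionIntervals a → FinUnionIntervals a' →
      FinUnionIntervals b → f (a ∪ a') b = f a b ⊔ f a' b)
    {a a' b : Set ℝ} (ha : a.OrdConnected) (ha' : a'.OrdConnected) (hb : b.OrdConnected)
    (hsub : a ⊆ a') : f a b ≤ f a' b := by
  have h := hsup1 a a' b (fui_of_oc ha) (fui_of_oc ha') (fui_of_oc hb)
  rw [Set.union_eq_self_of_subset_left hsub] at h
  rw [h]; exact le_sup_left

lemma f_mono_right
    (hsup2 : ∀ a b b', FinUnionIntervals a → FinUnionIntervals b →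
      FinUnionIntervals b' → f a (b ∪ b') = f a b ⊔ f a b')
    {a b b' : Set ℝ} (ha : a.OrdConnected) (hb : b.OrdConnected) (hb' : b'.OrdConnected)
    (hsub : b ⊆ b') : f a b ≤ f a b' := by
  have h := hsup2 a b b' (fui_of_oc ha) (fui_of_oc hb) (fui_of_oc hb')
  rw [Set.union_eq_self_of_subset_left hsub] at h
  rw [h]; exact le_sup_left

/-- Key step: a single rectangle covered by rectangles. -/
lemma rect_le
    (hbot1 : ∀ b, FinUnionIntervals b → f ∅ b = ⊥)
    (hbot2 : ∀ a, FinUnionIntervals a → f a ∅ = ⊥)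
    (hsup1 : ∀ a a' b, FinUnionIntervals a → FinUnionIntervals a' →
      FinUnionIntervals b → f (a ∪ a') b = f a b ⊔ f a' b)
    (hsup2 : ∀ a b b', FinUnionIntervals a → FinUnionIntervals b →
      FinUnionIntervals b' → f a (b ∪ b') = f a b ⊔ f a b')
    {κ : Type*} (J : Finset κ) (A' B' : κ → Set ℝ)
    (hA' : ∀ j ∈ J, (A' j).OrdConnected) (hB' : ∀ j ∈ J, (B' j).OrdConnected)
    {a b : Set ℝ} (ha : a.OrdConnected) (hb : b.OrdConnected)
    (hsub : a ×ˢ b ⊆ ⋃ j ∈ J, A' j ×ˢ B' j) :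
    f a b ≤ J.sup fun j => f (A' j) (B' j) := by
  classical
  set Aσ : ({j // j ∈ J} → Fin 3) → Set ℝ :=
    fun σ => a ∩ ⋂ j : {j // j ∈ J}, piece (σ j) (A' j.1) with hAσ
  set Bσ : ({j // j ∈ J} → Fin 3) → Set ℝ :=
    fun τ => b ∩ ⋂ j : {j // j ∈ J}, piece (τ j) (B' j.1) with hBσ
  have hAoc : ∀ σ, (Aσ σ).OrdConnected := fun σ =>
    ha.inter (oc_iInter fun j => piece_oc _ (hA' j.1 j.2))
  have hBoc : ∀ τ, (Bσ τ).OrdConnected := fun τ =>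
    hb.inter (oc_iInter fun j => piece_oc _ (hB' j.1 j.2))
  have haU : a = ⋃ σ ∈ (Finset.univ : Finset ({j // j ∈ J} → Fin 3)), Aσ σ := by
    apply Set.Subset.antisymm
    · intro x hx
      refine Set.mem_biUnion (Finset.mem_univ
        (fun j : {j // j ∈ J} => Classical.choose (piece_cover (hA' j.1 j.2) x))) ?_
      exact ⟨hx, Set.mem_iInter.2 fun j => Classical.choose_spec (piece_cover (hA' j.1 j.2) x)⟩
    · exact Set.iUnion₂_subset fun σ _ => Set.inter_subset_left
  have hbU : b = ⋃ τ ∈ (Finset.univ : Finset ({j // j ∈ J} → Fin 3)), Bσ τ := by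
    apply Set.Subset.antisymm
    · intro y hy
      refine Set.mem_biUnion (Finset.mem_univ
        (fun j : {j // j ∈ J} => Classical.choose (piece_cover (hB' j.1 j.2) y))) ?_
      exact ⟨hy, Set.mem_iInter.2 fun j => Classical.choose_spec (piece_cover (hB' j.1 j.2) y)⟩
    · exact Set.iUnion₂_subset fun τ _ => Set.inter_subset_left
  calc f a b = Finset.univ.sup fun σ => f (Aσ σ) b := by
        conv_lhs => rw [haU]
        exact f_sup_left f hbot1 hsup1 _ _ (fun σ _ => hAoc σ) hb
    _ ≤ J.sup fun j => f (A' j) (B' j) := by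
        apply Finset.sup_le
        intro σ _
        have : f (Aσ σ) b = Finset.univ.sup fun τ => f (Aσ σ) (Bσ τ) := by
          conv_lhs => rw [hbU]
          exact f_sup_right f hbot2 hsup2 _ _ (fun τ _ => hBoc τ) (hAoc σ)
        rw [this]
        apply Finset.sup_le
        intro τ _
        rcases Set.eq_empty_or_nonempty (Aσ σ) with hAe | ⟨x₀, hx₀⟩
        · rw [hAe, hbot1 _ (fui_of_oc (hBoc τ))]; exact bot_le
        rcases Set.eq_empty_or_nonempty (Bσ τ) with hBe | ⟨y₀, hy₀⟩
        · rw [hBe, hbot2 _ (fui_of_oc (hAoc σ))]; exact bot_le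
        -- find a covering rectangle containing (x₀, y₀)
        have hxy : (x₀, y₀) ∈ ⋃ j ∈ J, A' j ×ˢ B' j := hsub ⟨hx₀.1, hy₀.1⟩
        obtain ⟨j, hjJ, hxj, hyj⟩ := by
          simpa only [Set.mem_iUnion, Set.mem_prod, exists_prop] using hxy
        have hσ0 : σ ⟨j, hjJ⟩ = 0 :=
          piece_eq_zero (Set.mem_iInter.1 hx₀.2 ⟨j, hjJ⟩) hxj
        have hτ0 : τ ⟨j, hjJ⟩ = 0 :=
          piece_eq_zero (Set.mem_iInter.1 hy₀.2 ⟨j, hjJ⟩) hyj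
        have hAsub : Aσ σ ⊆ A' j := fun z hz => by
          have := Set.mem_iInter.1 hz.2 ⟨j, hjJ⟩
          rwa [hσ0] at this
        have hBsub : Bσ τ ⊆ B' j := fun z hz => by
          have := Set.mem_iInter.1 hz.2 ⟨j, hjJ⟩
          rwa [hτ0] at this
        calc f (Aσ σ) (Bσ τ) ≤ f (A' j) (Bσ τ) :=
              f_mono_left f hsup1 (hAoc σ) (hA' j hjJ) (hBoc τ) hAsub
          _ ≤ f (A' j) (B' j) :=
              f_mono_right f hsup2 (hA' j hjJ) (hBoc τ) (hB' j hjJ) hBsub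
          _ ≤ J.sup fun j => f (A' j) (B' j) := Finset.le_sup (f := fun j => f (A' j) (B' j)) hjJ

end Bimorphism

/-- If `f : B_ℝ × B_ℝ → X` is a bimorphism of join-semilattices with zero and a
cubical area of `ℝ²` admits two finite covers by rectangles, then the corresponding
joins of values of `f` coincide. -/
theorem stmt17 {X : Type*} [SemilatticeSup X] [OrderBot X]
    (f : Set ℝ → Set ℝ → X)
    (hbot1 : ∀ b, FinUnionIntervals b → f ∅ b = ⊥)
    (hbot2 : ∀ a, FinUnionIntervals a → f a ∅ = ⊥)
    (hsup1 : ∀ a a' b, FinUnionIntervals a → FinUnionIntervals a' →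
      FinUnionIntervals b → f (a ∪ a') b = f a b ⊔ f a' b)
    (hsup2 : ∀ a b b', FinUnionIntervals a → FinUnionIntervals b →
      FinUnionIntervals b' → f a (b ∪ b') = f a b ⊔ f a b')
    {ι κ : Type*} (I : Finset ι) (J : Finset κ)
    (A B : ι → Set ℝ) (A' B' : κ → Set ℝ)
    (hA : ∀ i ∈ I, (A i).OrdConnected) (hB : ∀ i ∈ I, (B i).OrdConnected)
    (hA' : ∀ j ∈ J, (A' j).OrdConnected) (hB' : ∀ j ∈ J, (B' j).OrdConnected)
    (hcover : (⋃ i ∈ I, A i ×ˢ B i) = ⋃ j ∈ J, A' j ×ˢ B' j) :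
    I.sup (fun i => f (A i) (B i)) = J.sup (fun j => f (A' j) (B' j)) := by
  apply le_antisymm
  · apply Finset.sup_le
    intro i hi
    exact rect_le f hbot1 hbot2 hsup1 hsup2 J A' B' hA' hB' (hA i hi) (hB i hi)
      (hcover ▸ Set.subset_biUnion_of_mem (u := fun i => A i ×ˢ B i) hi)
  · apply Finset.sup_le
    intro j hj
    exact rect_le f hbot1 hbot2 hsup1 hsup2 I A B hA hB (hA' j hj) (hB' j hj)
      (hcover ▸ Set.subset_biUnion_of_mem (u := fun j => A' j ×ˢ B' j) hj)
end

section
/- For cubical areas a, a' of ℝ^m and b, b' of ℝ^n, the product map satisfies: (a × b) ∩ (a' × b') = (a ∩ a') × (b ∩ b'), and the complement of a × b in ℝ^{m+n} equals (ℝ^m × bᶜ) ∪ (aᶜ × ℝ^n); hence (A, B) ↦ A × B is a bimorphism of Boolean-algebra-flavored operations from B_{ℝ^m} × B_{ℝ^n} to B_{ℝ^{m+n}}. -/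
open Set

/-- The product of `X ⊆ ℝᵐ` and `Y ⊆ ℝⁿ`, as a subset of `ℝ^(m+n)`. -/
def prodSet {m n : ℕ} (X : Set (Fin m → ℝ)) (Y : Set (Fin n → ℝ)) :
    Set (Fin (m + n) → ℝ) :=
  {z | (fun i => z (Fin.castAdd n i)) ∈ X ∧ (fun j => z (Fin.natAdd m j)) ∈ Y}

lemma isCube_prodSet {m n : ℕ} {C : Set (Fin m → ℝ)} {D : Set (Fin n → ℝ)}
    (hC : IsCube C) (hD : IsCube D) : IsCube (prodSet C D) := by
  obtain ⟨I, hI, rfl⟩ := hC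
  obtain ⟨J, hJ, rfl⟩ := hD
  refine ⟨fun k => Fin.addCases I J k, fun k => ?_, ?_⟩
  · refine Fin.addCases (fun i => ?_) (fun j => ?_) k <;> simp [hI, hJ]
  · ext z
    simp only [prodSet, mem_setOf_eq, mem_pi, mem_univ, forall_true_left, true_implies]
    constructor
    · rintro ⟨h1, h2⟩ k
      refine Fin.addCases (fun i => ?_) (fun j => ?_) k
      · simpa using h1 i
      · simpa using h2 j
    · intro h
      exact ⟨fun i => by simpa using h (Fin.castAdd n i),
        fun j => by simpa using h (Fin.natAdd m j)⟩

/-- The product map `(A, B) ↦ A × B` on cubical areas behaves as a bimorphism for the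
Boolean operations: products multiply intersections componentwise, the complement of a
product is `(ℝᵐ × bᶜ) ∪ (aᶜ × ℝⁿ)`, and the product of cubical areas is cubical. -/
theorem stmt19 {m n : ℕ} (a a' : Set (Fin m → ℝ)) (b b' : Set (Fin n → ℝ))
    (ha : CubicalArea a) (ha' : CubicalArea a') (hb : CubicalArea b)
    (hb' : CubicalArea b') :
    prodSet a b ∩ prodSet a' b' = prodSet (a ∩ a') (b ∩ b') ∧
    (prodSet a b)ᶜ = prodSet (Set.univ : Set (Fin m → ℝ)) bᶜ ∪
      prodSet aᶜ (Set.univ : Set (Fin n → ℝ)) ∧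
    CubicalArea (prodSet a b) := by
  refine ⟨?_, ?_, ?_⟩
  · ext z
    simp only [prodSet, mem_inter_iff, mem_setOf_eq]
    tauto
  · ext z
    simp only [prodSet, mem_compl_iff, mem_union, mem_setOf_eq, mem_univ, true_and, and_true,
      not_and_or]
    tauto
  · classical
    obtain ⟨𝒞, h𝒞, rfl⟩ := ha
    obtain ⟨𝒟, h𝒟, rfl⟩ := hb
    refine ⟨(𝒞 ×ˢ 𝒟).image (fun p => prodSet p.1 p.2), ?_, ?_⟩
    · intro C hC
      simp only [Finset.mem_image, Finset.mem_product] at hC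
      obtain ⟨⟨c, d⟩, ⟨hc, hd⟩, rfl⟩ := hC
      exact isCube_prodSet (h𝒞 c hc) (h𝒟 d hd)
    · ext z
      simp only [mem_sUnion, Finset.coe_image, mem_image, Finset.mem_coe,
        Finset.mem_product, prodSet, mem_setOf_eq, Prod.exists]
      constructor
      · rintro ⟨t, ⟨c, d, ⟨hc, hd⟩, rfl⟩, hz⟩
        exact ⟨⟨c, hc, hz.1⟩, ⟨d, hd, hz.2⟩⟩
      · rintro ⟨⟨c, hc, hzc⟩, ⟨d, hd, hzd⟩⟩
        exact ⟨prodSet c d, ⟨c, d, ⟨hc, hd⟩, rfl⟩, hzc, hzd⟩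
end
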